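/- arXiv:2208.01719 — 4 statements merged into one kernel-verified Lean document; each statement's English description precedes it below -/
import Mathlib

section
/- For every δ ∈ [0,1), θ ∈ [0,(1−δ)/2), and λ > 0, setting ε = (1+δ)/2 − √((1−δ)²/4 − θ²) (so ε < 1 and θ/(1−ε) < 1), there exists a constant C > 0 (depending only on δ, θ, λ) with the following property. For every streaming least-squares setup satisfying the stability hypotheses with parameters κ, δ, θ, λ and with M_y = κ^{−1/2}·sup_{k≥0} ‖(y_k, y_{k+1})‖₂ finite, the following holds: for each k ≥ 0 the sequence K ↦ α_{k|K} (K ≥ k) converges to a limit α*_k ∈ ℝ^N, and for all K ≥ k, ‖α_{k|K} − α*_k‖₂ ≤ C · M_y · (θ/(1−ε))^{K−k}. -/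
open Matrix

/-- Euclidean (ℓ²) norm of a vector in ℝ^n. -/
noncomputable def vecNorm {n : Type*} [Fintype n] (v : n → ℝ) : ℝ :=
  Real.sqrt (∑ i, v i ^ 2)

/-- Spectral norm (largest singular value) of a real matrix, defined as the operator
norm: the supremum of `‖A x‖₂` over unit vectors `x`. -/
noncomputable def matSpectralNorm {m n : Type*} [Fintype m] [Fintype n]
    (A : Matrix m n ℝ) : ℝ :=
  sSup ((fun x => vecNorm (A.mulVec x)) '' {x | vecNorm x = 1})

/-- Smallest eigenvalue of a real symmetric matrix, via the Rayleigh quotient. -/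
noncomputable def eigMin {n : Type*} [Fintype n] (S : Matrix n n ℝ) : ℝ :=
  sInf ((fun x => x ⬝ᵥ S.mulVec x) '' {x | vecNorm x = 1})

section Streaming

variable {N : ℕ} {M : ℕ → ℕ}

/-- `D_k = A_kᵀ A_k + B_{k+1}ᵀ B_{k+1} + λ_k I`. -/
noncomputable def Dmat (A B : ∀ k : ℕ, Matrix (Fin (M k)) (Fin N) ℝ) (lam : ℕ → ℝ)
    (k : ℕ) : Matrix (Fin N) (Fin N) ℝ :=
  (A k)ᵀ * A k + (B (k + 1))ᵀ * B (k + 1) + lam k • 1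

/-- `E_k = A_{k+1}ᵀ B_{k+1}`. -/
noncomputable def Emat (A B : ∀ k : ℕ, Matrix (Fin (M k)) (Fin N) ℝ) (k : ℕ) :
    Matrix (Fin N) (Fin N) ℝ :=
  (A (k + 1))ᵀ * B (k + 1)

/-- `D_k' = A_kᵀ A_k + λ_k I`. -/
noncomputable def Dmat' (A : ∀ k : ℕ, Matrix (Fin (M k)) (Fin N) ℝ) (lam : ℕ → ℝ)
    (k : ℕ) : Matrix (Fin N) (Fin N) ℝ :=
  (A k)ᵀ * A k + lam k • 1

/-- `Q₀ = D₀`, `Q_{k+1} = D_{k+1} − E_k U_k` with `U_k = Q_k⁻¹ E_kᵀ`. -/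
noncomputable def Qmat (A B : ∀ k : ℕ, Matrix (Fin (M k)) (Fin N) ℝ) (lam : ℕ → ℝ) :
    ℕ → Matrix (Fin N) (Fin N) ℝ
  | 0 => Dmat A B lam 0
  | k + 1 => Dmat A B lam (k + 1) - Emat A B k * ((Qmat A B lam k)⁻¹ * (Emat A B k)ᵀ)

/-- `U_k = Q_k⁻¹ E_kᵀ`. -/
noncomputable def Umat (A B : ∀ k : ℕ, Matrix (Fin (M k)) (Fin N) ℝ) (lam : ℕ → ℝ)
    (k : ℕ) : Matrix (Fin N) (Fin N) ℝ :=
  (Qmat A B lam k)⁻¹ * (Emat A B k)ᵀ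

/-- `Q₀' = D₀'`, `Q_k' = D_k' − E_{k−1} U_{k−1}` for `k ≥ 1`. -/
noncomputable def Qmat' (A B : ∀ k : ℕ, Matrix (Fin (M k)) (Fin N) ℝ) (lam : ℕ → ℝ) :
    ℕ → Matrix (Fin N) (Fin N) ℝ
  | 0 => Dmat' A lam 0
  | k + 1 => Dmat' A lam (k + 1) - Emat A B k * Umat A B lam k

/-- `w_k = A_kᵀ y_k + B_{k+1}ᵀ y_{k+1}`. -/
noncomputable def wvec (A B : ∀ k : ℕ, Matrix (Fin (M k)) (Fin N) ℝ)
    (y : ∀ k : ℕ, Fin (M k) → ℝ) (k : ℕ) : Fin N → ℝ :=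
  (A k)ᵀ.mulVec (y k) + (B (k + 1))ᵀ.mulVec (y (k + 1))

/-- `w_k' = A_kᵀ y_k`. -/
noncomputable def wvec' (A : ∀ k : ℕ, Matrix (Fin (M k)) (Fin N) ℝ)
    (y : ∀ k : ℕ, Fin (M k) → ℝ) (k : ℕ) : Fin N → ℝ :=
  (A k)ᵀ.mulVec (y k)

/-- `v₀ = Q₀⁻¹ w₀`, `v_k = Q_k⁻¹ (w_k − E_{k−1} v_{k−1})` for `k ≥ 1`. -/
noncomputable def vvec (A B : ∀ k : ℕ, Matrix (Fin (M k)) (Fin N) ℝ) (lam : ℕ → ℝ)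
    (y : ∀ k : ℕ, Fin (M k) → ℝ) : ℕ → Fin N → ℝ
  | 0 => (Qmat A B lam 0)⁻¹.mulVec (wvec A B y 0)
  | k + 1 => (Qmat A B lam (k + 1))⁻¹.mulVec
      (wvec A B y (k + 1) - (Emat A B k).mulVec (vvec A B lam y k))

/-- `v₀' = Q₀'⁻¹ w₀'`, `v_K' = Q_K'⁻¹ (w_K' − E_{K−1} v_{K−1})` for `K ≥ 1`. -/
noncomputable def vvec' (A B : ∀ k : ℕ, Matrix (Fin (M k)) (Fin N) ℝ) (lam : ℕ → ℝ)
    (y : ∀ k : ℕ, Fin (M k) → ℝ) : ℕ → Fin N → ℝ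
  | 0 => (Qmat' A B lam 0)⁻¹.mulVec (wvec' A y 0)
  | K + 1 => (Qmat' A B lam (K + 1))⁻¹.mulVec
      (wvec' A y (K + 1) - (Emat A B K).mulVec (vvec A B lam y K))

/-- Backward recursion producing the streaming least-squares estimates, indexed by the
lag `l = K − k`: `alphaAux K 0 = v_K'` and `alphaAux K (l+1) = v_{K−l−1} − U_{K−l−1} ·
alphaAux K l`. -/
noncomputable def alphaAux (A B : ∀ k : ℕ, Matrix (Fin (M k)) (Fin N) ℝ) (lam : ℕ → ℝ)
    (y : ∀ k : ℕ, Fin (M k) → ℝ) (K : ℕ) : ℕ → Fin N → ℝ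
  | 0 => vvec' A B lam y K
  | l + 1 => vvec A B lam y (K - (l + 1)) -
      (Umat A B lam (K - (l + 1))).mulVec (alphaAux A B lam y K l)

/-- The streaming least-squares estimate `α_{k|K}` (for `0 ≤ k ≤ K`): it satisfies
`α_{K|K} = v_K'` and `α_{k|K} = v_k − U_k α_{k+1|K}` for `k < K`. -/
noncomputable def alphaEst (A B : ∀ k : ℕ, Matrix (Fin (M k)) (Fin N) ℝ) (lam : ℕ → ℝ)
    (y : ∀ k : ℕ, Fin (M k) → ℝ) (k K : ℕ) : Fin N → ℝ :=
  alphaAux A B lam y K (K - k)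

end Streaming


set_option linter.unusedSectionVars false
section Helpers

variable {n m : Type*} [Fintype n] [Fintype m] [DecidableEq n] [DecidableEq m]

lemma vecNorm_eq_norm (v : n → ℝ) :
    vecNorm v = ‖(WithLp.equiv 2 (n → ℝ)).symm v‖ := by
  rw [EuclideanSpace.norm_eq]
  simp [vecNorm, Real.norm_eq_abs, sq_abs]

lemma dot_eq_inner (v w : n → ℝ) :
    v ⬝ᵥ w = (inner ℝ ((WithLp.equiv 2 (n → ℝ)).symm v) ((WithLp.equiv 2 (n → ℝ)).symm w) : ℝ) := by
  simp [dotProduct, PiLp.inner_apply, RCLike.inner_apply, mul_comm]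

lemma vecNorm_nonneg (v : n → ℝ) : 0 ≤ vecNorm v := Real.sqrt_nonneg _

lemma dot_self_eq (v : n → ℝ) : v ⬝ᵥ v = vecNorm v ^ 2 := by
  rw [dot_eq_inner, vecNorm_eq_norm, real_inner_self_eq_norm_sq]

lemma dot_le_norm (v w : n → ℝ) : v ⬝ᵥ w ≤ vecNorm v * vecNorm w := by
  rw [dot_eq_inner, vecNorm_eq_norm, vecNorm_eq_norm]
  exact real_inner_le_norm _ _

lemma vecNorm_zero_iff (v : n → ℝ) : vecNorm v = 0 ↔ v = 0 := by
  rw [vecNorm_eq_norm, norm_eq_zero]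
  constructor
  · intro h; exact (WithLp.equiv 2 (n → ℝ)).symm.injective (by rw [h]; rfl)
  · rintro rfl; rfl

lemma vecNorm_sub_le (v w : n → ℝ) : vecNorm (v - w) ≤ vecNorm v + vecNorm w := by
  simp only [vecNorm_eq_norm]
  exact norm_sub_le _ _

lemma vecNorm_add_le (v w : n → ℝ) : vecNorm (v + w) ≤ vecNorm v + vecNorm w := by
  simp only [vecNorm_eq_norm]
  exact norm_add_le _ _

lemma vecNorm_neg (v : n → ℝ) : vecNorm (-v) = vecNorm v := by
  simp only [vecNorm]; congr 1
  apply Finset.sum_congr rfl; intro i _; simp [neg_pow]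

lemma vecNorm_smul (c : ℝ) (v : n → ℝ) : vecNorm (c • v) = |c| * vecNorm v := by
  simp only [vecNorm_eq_norm]
  rw [show (WithLp.equiv 2 (n → ℝ)).symm (c • v) = c • (WithLp.equiv 2 (n → ℝ)).symm v from rfl,
    norm_smul, Real.norm_eq_abs]

lemma abs_le_vecNorm (v : n → ℝ) (i : n) : |v i| ≤ vecNorm v := by
  have : |v i| = Real.sqrt (v i ^ 2) := (Real.sqrt_sq_eq_abs _).symm
  rw [this, vecNorm]
  exact Real.sqrt_le_sqrt (Finset.single_le_sum (fun j _ => sq_nonneg (v j)) (Finset.mem_univ i))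

lemma vecNorm_eq_dist (a b : n → ℝ) :
    vecNorm (a - b) =
      dist ((WithLp.equiv 2 (n → ℝ)).symm a) ((WithLp.equiv 2 (n → ℝ)).symm b) := by
  rw [dist_eq_norm, vecNorm_eq_norm]; rfl

/-- operator bound predicate -/
def opB (A : Matrix m n ℝ) (c : ℝ) : Prop := ∀ v, vecNorm (A.mulVec v) ≤ c * vecNorm v

lemma neg_norm_le_dot (v w : n → ℝ) : -(vecNorm v * vecNorm w) ≤ v ⬝ᵥ w := by
  have h := dot_le_norm (-v) w
  have h2 : (-v) ⬝ᵥ w = -(v ⬝ᵥ w) := by simp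
  have h3 : vecNorm (-v) = vecNorm v := vecNorm_neg v
  rw [h2, h3] at h
  linarith

lemma mulVec_norm_eq (A : Matrix m n ℝ) (x : n → ℝ) :
    vecNorm (A.mulVec x) =
      ‖LinearMap.toContinuousLinearMap (Matrix.toEuclideanLin A) ((WithLp.equiv 2 (n → ℝ)).symm x)‖ := by
  rw [vecNorm_eq_norm]
  rfl

lemma opB_of_unit_bound {A : Matrix m n ℝ} {c : ℝ}
    (h : ∀ u : n → ℝ, vecNorm u = 1 → vecNorm (A.mulVec u) ≤ c) : opB A c := by
  intro v
  rcases eq_or_ne v 0 with rfl | hv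
  · rw [Matrix.mulVec_zero]
    have h0 : vecNorm (0 : m → ℝ) = 0 := (vecNorm_zero_iff _).mpr rfl
    have h0' : vecNorm (0 : n → ℝ) = 0 := (vecNorm_zero_iff _).mpr rfl
    rw [h0, h0', mul_zero]
  · have ht : 0 < vecNorm v := lt_of_le_of_ne (vecNorm_nonneg v)
      (Ne.symm (fun h0 => hv ((vecNorm_zero_iff v).mp h0)))
    set t := vecNorm v with htdef
    have hu : vecNorm (t⁻¹ • v) = 1 := by
      rw [vecNorm_smul, abs_of_pos (inv_pos.mpr ht)]
      field_simp
      exact htdef.symm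
    have hAv : A.mulVec v = t • A.mulVec (t⁻¹ • v) := by
      rw [Matrix.mulVec_smul, smul_smul, mul_inv_cancel₀ (ne_of_gt ht), one_smul]
    rw [hAv, vecNorm_smul, abs_of_pos ht]
    calc t * vecNorm (A.mulVec (t⁻¹ • v)) ≤ t * c :=
          mul_le_mul_of_nonneg_left (h _ hu) (le_of_lt ht)
      _ = c * t := mul_comm _ _

lemma opB_of_spectral {A : Matrix m n ℝ} {c : ℝ} (h : matSpectralNorm A ≤ c) : opB A c := by
  apply opB_of_unit_bound
  intro u hu
  refine le_trans (le_trans ?_ h) (le_refl c)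
  apply le_csSup
  · refine ⟨‖LinearMap.toContinuousLinearMap (Matrix.toEuclideanLin A)‖, ?_⟩
    rintro t ⟨x, hx, rfl⟩
    dsimp only
    rw [mulVec_norm_eq]
    calc ‖_‖ ≤ ‖LinearMap.toContinuousLinearMap (Matrix.toEuclideanLin A)‖ *
          ‖(WithLp.equiv 2 (n → ℝ)).symm x‖ := ContinuousLinearMap.le_opNorm _ _
      _ = _ := by rw [← vecNorm_eq_norm, hx, mul_one]
  · exact ⟨u, hu, rfl⟩

lemma opB_transpose {A : Matrix m n ℝ} {c : ℝ} (h : opB A c) (hc : 0 ≤ c) : opB Aᵀ c := by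
  intro x
  set z := Aᵀ *ᵥ x with hzdef
  have key : z ⬝ᵥ z = x ⬝ᵥ (A *ᵥ z) := by
    rw [Matrix.dotProduct_mulVec x A z, ← Matrix.mulVec_transpose]
  have h1 : vecNorm z ^ 2 ≤ vecNorm x * (c * vecNorm z) := by
    calc vecNorm z ^ 2 = z ⬝ᵥ z := (dot_self_eq z).symm
      _ = x ⬝ᵥ (A *ᵥ z) := key
      _ ≤ vecNorm x * vecNorm (A *ᵥ z) := dot_le_norm _ _
      _ ≤ vecNorm x * (c * vecNorm z) :=
          mul_le_mul_of_nonneg_left (h z) (vecNorm_nonneg x)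
  rcases eq_or_lt_of_le (vecNorm_nonneg z) with h0 | h0
  · rw [← h0]; exact mul_nonneg hc (vecNorm_nonneg x)
  · nlinarith [vecNorm_nonneg x]

lemma quad_lower_of_eigMin {Q : Matrix n n ℝ} {c : ℝ} (h : c ≤ eigMin Q) :
    ∀ x, c * vecNorm x ^ 2 ≤ x ⬝ᵥ Q.mulVec x := by
  have hunit : ∀ u : n → ℝ, vecNorm u = 1 → c ≤ u ⬝ᵥ Q.mulVec u := by
    intro u hu
    refine le_trans h (csInf_le ?_ ⟨u, hu, rfl⟩)
    refine ⟨-‖LinearMap.toContinuousLinearMap (Matrix.toEuclideanLin Q)‖, ?_⟩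
    rintro t ⟨x, hx, rfl⟩
    dsimp only
    have h1 := neg_norm_le_dot x (Q *ᵥ x)
    have h2 : vecNorm (Q *ᵥ x) ≤ ‖LinearMap.toContinuousLinearMap (Matrix.toEuclideanLin Q)‖ := by
      rw [mulVec_norm_eq]
      calc ‖_‖ ≤ ‖LinearMap.toContinuousLinearMap (Matrix.toEuclideanLin Q)‖ *
            ‖(WithLp.equiv 2 (n → ℝ)).symm x‖ := ContinuousLinearMap.le_opNorm _ _
        _ = _ := by rw [← vecNorm_eq_norm, hx, mul_one]
    have hx1 : vecNorm x = 1 := hx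
    nlinarith [vecNorm_nonneg (Q *ᵥ x)]
  intro v
  rcases eq_or_ne v 0 with rfl | hv
  · have h0 : vecNorm (0 : n → ℝ) = 0 := (vecNorm_zero_iff _).mpr rfl
    rw [h0, Matrix.mulVec_zero]
    simp
  · have ht : 0 < vecNorm v := lt_of_le_of_ne (vecNorm_nonneg v)
      (Ne.symm (fun h0 => hv ((vecNorm_zero_iff v).mp h0)))
    set t := vecNorm v with htdef
    have hu : vecNorm (t⁻¹ • v) = 1 := by
      rw [vecNorm_smul, abs_of_pos (inv_pos.mpr ht)]; field_simp; exact htdef.symm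
    have hq := hunit _ hu
    have hexp : (t⁻¹ • v) ⬝ᵥ Q.mulVec (t⁻¹ • v) = t⁻¹ * t⁻¹ * (v ⬝ᵥ Q.mulVec v) := by
      rw [Matrix.mulVec_smul, smul_dotProduct, dotProduct_smul]
      simp [smul_eq_mul]; ring
    rw [hexp] at hq
    have ht2 : 0 < t ^ 2 := by positivity
    have := mul_le_mul_of_nonneg_left hq (le_of_lt ht2)
    calc c * t ^ 2 = t ^ 2 * c := by ring
      _ ≤ t ^ 2 * (t⁻¹ * t⁻¹ * (v ⬝ᵥ Q.mulVec v)) := this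
      _ = v ⬝ᵥ Q.mulVec v := by field_simp

lemma coercive_isUnit_opB {Q : Matrix n n ℝ} {c : ℝ} (hc : 0 < c)
    (h : ∀ x, c * vecNorm x ^ 2 ≤ x ⬝ᵥ Q.mulVec x) : IsUnit Q ∧ opB Q⁻¹ c⁻¹ := by
  have hinj : Function.Injective Q.mulVec := by
    intro x y hxy
    have hsub : Q.mulVec (x - y) = 0 := by rw [Matrix.mulVec_sub, hxy, sub_self]
    have := h (x - y)
    rw [hsub] at this
    have h0 : (x - y) ⬝ᵥ (0 : n → ℝ) = 0 := by simp
    rw [h0] at this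
    have hsq : vecNorm (x - y) ^ 2 ≤ 0 := by nlinarith
    have hn0 : vecNorm (x - y) = 0 := by
      nlinarith [vecNorm_nonneg (x - y), sq_nonneg (vecNorm (x - y))]
    exact sub_eq_zero.mp ((vecNorm_zero_iff _).mp hn0)
  have hunit : IsUnit Q := Matrix.mulVec_injective_iff_isUnit.mp hinj
  refine ⟨hunit, ?_⟩
  have hQQ : Q * Q⁻¹ = 1 := Matrix.mul_nonsing_inv Q ((Matrix.isUnit_iff_isUnit_det Q).mp hunit)
  intro y
  set x := Q⁻¹ *ᵥ y with hxdef
  have hx : Q *ᵥ x = y := by rw [hxdef, Matrix.mulVec_mulVec, hQQ, Matrix.one_mulVec]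
  have h1 : c * vecNorm x ^ 2 ≤ x ⬝ᵥ y := by rw [← hx]; exact h x
  have h2 : x ⬝ᵥ y ≤ vecNorm x * vecNorm y := dot_le_norm _ _
  rcases eq_or_lt_of_le (vecNorm_nonneg x) with h0 | h0
  · rw [← h0]; exact mul_nonneg (le_of_lt (inv_pos.mpr hc)) (vecNorm_nonneg y)
  · have hkey : c * vecNorm x ≤ vecNorm y := by nlinarith
    calc vecNorm x = c⁻¹ * (c * vecNorm x) := by field_simp
      _ ≤ c⁻¹ * vecNorm y := mul_le_mul_of_nonneg_left hkey (le_of_lt (inv_pos.mpr hc))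

end Helpers

set_option maxHeartbeats 1000000

/-- exponential convergence of the streaming least-squares estimates.
For every `δ ∈ [0,1)`, `θ ∈ [0,(1−δ)/2)`, `λ > 0`, with
`ε = (1+δ)/2 − √((1−δ)²/4 − θ²)` (so `ε < 1` and `θ/(1−ε) < 1`), there is a constant
`C > 0` depending only on `δ, θ, λ` such that for every streaming least-squares setup
satisfying the stability hypotheses with parameters `κ, δ, θ, λ` and with
`M_y = κ^{−1/2}·sup_k ‖(y_k, y_{k+1})‖₂` finite, the estimates `α_{k|K}` converge as
`K → ∞` to limits `α*_k`, with `‖α_{k|K} − α*_k‖₂ ≤ C·M_y·(θ/(1−ε))^{K−k}`. -/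
theorem streaming_estimates_converge_exponentially
    (δ θ lam0 : ℝ) (hδ0 : 0 ≤ δ) (hδ1 : δ < 1)
    (hθ0 : 0 ≤ θ) (hθ : θ < (1 - δ) / 2) (hlam0 : 0 < lam0)
    (ε : ℝ) (hε : ε = (1 + δ) / 2 - Real.sqrt ((1 - δ) ^ 2 / 4 - θ ^ 2)) :
    ε < 1 ∧ θ / (1 - ε) < 1 ∧
    ∃ C : ℝ, 0 < C ∧
      ∀ (N : ℕ), 1 ≤ N → ∀ (M : ℕ → ℕ)
        (A B : ∀ k : ℕ, Matrix (Fin (M k)) (Fin N) ℝ)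
        (y : ∀ k : ℕ, Fin (M k) → ℝ) (lam : ℕ → ℝ) (κ My : ℝ),
        (∀ k, 0 ≤ lam k) → 1 ≤ κ →
        (∀ k, matSpectralNorm (Dmat A B lam k - κ • (1 : Matrix (Fin N) (Fin N) ℝ)) ≤ κ * δ) →
        (∀ k, matSpectralNorm (Emat A B k) ≤ κ * θ) →
        (∀ k, κ * lam0 ≤ eigMin (Qmat' A B lam k)) →
        BddAbove (Set.range fun k : ℕ =>
          Real.sqrt ((∑ i, y k i ^ 2) + ∑ i, y (k + 1) i ^ 2) / Real.sqrt κ) →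
        My = sSup (Set.range fun k : ℕ =>
          Real.sqrt ((∑ i, y k i ^ 2) + ∑ i, y (k + 1) i ^ 2) / Real.sqrt κ) →
        ∃ αstar : ℕ → Fin N → ℝ,
          (∀ k : ℕ, Filter.Tendsto (fun K : ℕ => alphaEst A B lam y k K)
            Filter.atTop (nhds (αstar k))) ∧
          ∀ k K : ℕ, k ≤ K →
            vecNorm (alphaEst A B lam y k K - αstar k) ≤
              C * My * (θ / (1 - ε)) ^ (K - k) := by
  have h2δ : (0:ℝ) < 1 - δ := by linarith
  have hrad : 0 ≤ (1 - δ) ^ 2 / 4 - θ ^ 2 := by nlinarith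
  have hs0 : 0 ≤ Real.sqrt ((1 - δ) ^ 2 / 4 - θ ^ 2) := Real.sqrt_nonneg _
  have hs2 : Real.sqrt ((1 - δ) ^ 2 / 4 - θ ^ 2) ^ 2 = (1 - δ) ^ 2 / 4 - θ ^ 2 :=
    Real.sq_sqrt hrad
  set s := Real.sqrt ((1 - δ) ^ 2 / 4 - θ ^ 2) with hsdef
  have hsle : s ≤ (1 - δ) / 2 := by nlinarith
  have h1ε : 1 - ε = (1 - δ) / 2 + s := by rw [hε]; ring
  have hεδ : δ ≤ ε := by nlinarith
  have hε1 : ε < 1 := by nlinarith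
  have h1εpos : 0 < 1 - ε := by linarith
  have hkey : (1 - ε) * (ε - δ) = θ ^ 2 := by
    linear_combination (s - ε + (1 + δ) / 2) * hε - hs2
  set r := θ / (1 - ε) with hrdef
  have hr0 : 0 ≤ r := div_nonneg hθ0 (le_of_lt h1εpos)
  have hr1 : r < 1 := by
    rw [hrdef, div_lt_one h1εpos]; nlinarith
  have h1r : 0 < 1 - r := by linarith
  have hθr : θ = r * (1 - ε) := by rw [hrdef]; field_simp
  set cW := 2 * Real.sqrt 2 with hcWdef
  have hcW0 : 0 < cW := by positivity
  set cV := cW / ((1 - ε) * (1 - r)) with hcVdef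
  have hcV0 : 0 < cV := by positivity
  set cV' := (cW + θ * cV) / lam0 with hcV'def
  have hcV'0 : 0 < cV' := by
    apply div_pos _ hlam0
    nlinarith [mul_nonneg hθ0 hcV0.le]
  set c0 := cV + r * cV' + cV' with hc0def
  have hc00 : 0 < c0 := by nlinarith [mul_nonneg hr0 hcV'0.le]
  refine ⟨hε1, hr1, c0 / (1 - r), div_pos hc00 h1r, ?_⟩
  intro N hN M A B y lam κ My hlam hκ hD hE hQ'low hBdd hMyeq
  have hκ0 : (0:ℝ) < κ := lt_of_lt_of_le one_pos hκ
  have hsκ0 : 0 < Real.sqrt κ := Real.sqrt_pos.mpr hκ0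
  have hκsq : Real.sqrt κ * Real.sqrt κ = κ := Real.mul_self_sqrt hκ0.le
  -- My is nonnegative and dominates each y-norm
  have hmem : ∀ k : ℕ,
      Real.sqrt ((∑ i, y k i ^ 2) + ∑ i, y (k + 1) i ^ 2) / Real.sqrt κ ≤ My := by
    intro k
    rw [hMyeq]
    exact le_csSup hBdd ⟨k, rfl⟩
  have hMy0 : 0 ≤ My := le_trans (by positivity) (hmem 0)
  have hyk : ∀ k, vecNorm (y k) ≤ Real.sqrt κ * My := by
    intro k
    have h1 : vecNorm (y k) ≤ Real.sqrt ((∑ i, y k i ^ 2) + ∑ i, y (k + 1) i ^ 2) := by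
      apply Real.sqrt_le_sqrt
      have : (0:ℝ) ≤ ∑ i, y (k + 1) i ^ 2 := Finset.sum_nonneg fun i _ => sq_nonneg _
      linarith
    have h2 := hmem k
    rw [div_le_iff₀ hsκ0] at h2
    calc vecNorm (y k) ≤ _ := h1
      _ ≤ My * Real.sqrt κ := h2
      _ = Real.sqrt κ * My := mul_comm _ _
  -- quadratic-form bounds for D
  have hDop : ∀ k, opB (Dmat A B lam k - κ • 1) (κ * δ) := fun k => opB_of_spectral (hD k)
  have hDdec : ∀ (k : ℕ) (x : Fin N → ℝ),
      (Dmat A B lam k) *ᵥ x = (Dmat A B lam k - κ • 1) *ᵥ x + κ • x := by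
    intro k x
    have h1 : (κ • (1 : Matrix (Fin N) (Fin N) ℝ)) *ᵥ x = κ • x := by
      rw [Matrix.smul_mulVec, Matrix.one_mulVec]
    rw [Matrix.sub_mulVec, h1, sub_add_cancel]
  have hdotsmul : ∀ (x : Fin N → ℝ) (c : ℝ), x ⬝ᵥ (c • x) = c * vecNorm x ^ 2 := by
    intro x c
    rw [dotProduct_smul, smul_eq_mul, dot_self_eq]
  have hDlow : ∀ (k : ℕ) (x : Fin N → ℝ),
      κ * (1 - δ) * vecNorm x ^ 2 ≤ x ⬝ᵥ (Dmat A B lam k) *ᵥ x := by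
    intro k x
    have hd := hDop k x
    have h1 := neg_norm_le_dot x ((Dmat A B lam k - κ • 1) *ᵥ x)
    rw [hDdec k x, dotProduct_add, hdotsmul x κ]
    have hcs := mul_le_mul_of_nonneg_left hd (vecNorm_nonneg x)
    have hsq : vecNorm x * vecNorm x = vecNorm x ^ 2 := by ring
    nlinarith only [h1, hcs, hsq]
  have hDhigh : ∀ (k : ℕ) (x : Fin N → ℝ),
      x ⬝ᵥ (Dmat A B lam k) *ᵥ x ≤ κ * (1 + δ) * vecNorm x ^ 2 := by
    intro k x
    have hd := hDop k x
    have h1 := dot_le_norm x ((Dmat A B lam k - κ • 1) *ᵥ x)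
    rw [hDdec k x, dotProduct_add, hdotsmul x κ]
    have hcs := mul_le_mul_of_nonneg_left hd (vecNorm_nonneg x)
    have hsq : vecNorm x * vecNorm x = vecNorm x ^ 2 := by ring
    nlinarith only [h1, hcs, hsq]
  have hEop : ∀ k, opB (Emat A B k) (κ * θ) := fun k => opB_of_spectral (hE k)
  have hκθ0 : 0 ≤ κ * θ := mul_nonneg hκ0.le hθ0
  have hEopT : ∀ k, opB (Emat A B k)ᵀ (κ * θ) := fun k => opB_transpose (hEop k) hκθ0
  -- quadratic identity for D
  have hABq : ∀ (k : ℕ) (x : Fin N → ℝ),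
      x ⬝ᵥ (Dmat A B lam k) *ᵥ x =
        vecNorm ((A k) *ᵥ x) ^ 2 + vecNorm ((B (k + 1)) *ᵥ x) ^ 2 + lam k * vecNorm x ^ 2 := by
    intro k x
    have hAA : x ⬝ᵥ ((A k)ᵀ * A k) *ᵥ x = vecNorm ((A k) *ᵥ x) ^ 2 := by
      rw [← Matrix.mulVec_mulVec, Matrix.dotProduct_mulVec x (A k)ᵀ, Matrix.vecMul_transpose,
        dot_self_eq]
    have hBB : x ⬝ᵥ ((B (k + 1))ᵀ * B (k + 1)) *ᵥ x = vecNorm ((B (k + 1)) *ᵥ x) ^ 2 := by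
      rw [← Matrix.mulVec_mulVec, Matrix.dotProduct_mulVec x (B (k + 1))ᵀ,
        Matrix.vecMul_transpose, dot_self_eq]
    have hlamx : x ⬝ᵥ (lam k • (1 : Matrix (Fin N) (Fin N) ℝ)) *ᵥ x = lam k * vecNorm x ^ 2 := by
      rw [Matrix.smul_mulVec, Matrix.one_mulVec, hdotsmul]
    rw [Dmat, Matrix.add_mulVec, Matrix.add_mulVec, dotProduct_add,
      dotProduct_add, hAA, hBB, hlamx]
  have h2κ : (0:ℝ) ≤ 2 * κ := by linarith
  have hsqrt2κ : Real.sqrt (2 * κ) = Real.sqrt 2 * Real.sqrt κ := Real.sqrt_mul (by norm_num) κ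
  have hABop : ∀ (k : ℕ) (x : Fin N → ℝ),
      vecNorm ((A k) *ᵥ x) ≤ Real.sqrt (2 * κ) * vecNorm x ∧
      vecNorm ((B (k + 1)) *ᵥ x) ≤ Real.sqrt (2 * κ) * vecNorm x := by
    intro k x
    have hq := hABq k x
    have hh := hDhigh k x
    have hlx : 0 ≤ lam k * vecNorm x ^ 2 := mul_nonneg (hlam k) (sq_nonneg _)
    have hbd : ∀ t : ℝ, 0 ≤ t → t ^ 2 ≤ 2 * κ * vecNorm x ^ 2 →
        t ≤ Real.sqrt (2 * κ) * vecNorm x := by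
      intro t ht h2
      have := Real.sqrt_le_sqrt h2
      rw [Real.sqrt_sq ht] at this
      calc t ≤ Real.sqrt (2 * κ * vecNorm x ^ 2) := this
        _ = Real.sqrt (2 * κ) * Real.sqrt (vecNorm x ^ 2) := Real.sqrt_mul h2κ _
        _ = Real.sqrt (2 * κ) * vecNorm x := by rw [Real.sqrt_sq (vecNorm_nonneg x)]
    have hprod : 0 ≤ κ * (1 - δ) * vecNorm x ^ 2 :=
      mul_nonneg (mul_nonneg hκ0.le h2δ.le) (sq_nonneg _)
    constructor
    · apply hbd _ (vecNorm_nonneg _)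
      linarith only [hq, hh, hlx, hprod, sq_nonneg (vecNorm ((B (k + 1)) *ᵥ x))]
    · apply hbd _ (vecNorm_nonneg _)
      linarith only [hq, hh, hlx, hprod, sq_nonneg (vecNorm ((A k) *ᵥ x))]
  have hAop : ∀ k, opB (A k) (Real.sqrt (2 * κ)) := fun k x => (hABop k x).1
  have hBop : ∀ k, opB (B (k + 1)) (Real.sqrt (2 * κ)) := fun k x => (hABop k x).2
  have hATop : ∀ k, opB (A k)ᵀ (Real.sqrt (2 * κ)) :=
    fun k => opB_transpose (hAop k) (Real.sqrt_nonneg _)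
  have hBTop : ∀ k, opB (B (k + 1))ᵀ (Real.sqrt (2 * κ)) :=
    fun k => opB_transpose (hBop k) (Real.sqrt_nonneg _)
  -- bounds on w, w'
  have hyw : ∀ (k : ℕ) (Cm : Matrix (Fin (M k)) (Fin N) ℝ), opB Cmᵀ (Real.sqrt (2 * κ)) →
      vecNorm (Cmᵀ *ᵥ y k) ≤ Real.sqrt 2 * (κ * My) := by
    intro k Cm hC
    calc vecNorm (Cmᵀ *ᵥ y k) ≤ Real.sqrt (2 * κ) * vecNorm (y k) := hC (y k)
      _ ≤ Real.sqrt (2 * κ) * (Real.sqrt κ * My) :=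
          mul_le_mul_of_nonneg_left (hyk k) (Real.sqrt_nonneg _)
      _ = Real.sqrt 2 * (κ * My) := by
          rw [hsqrt2κ]
          linear_combination Real.sqrt 2 * My * hκsq
  have hw : ∀ k, vecNorm (wvec A B y k) ≤ cW * (κ * My) := by
    intro k
    have h1 := hyw k (A k) (hATop k)
    have h2 := hyw (k + 1) (B (k + 1)) (hBTop k)
    calc vecNorm (wvec A B y k) ≤
        vecNorm ((A k)ᵀ *ᵥ y k) + vecNorm ((B (k + 1))ᵀ *ᵥ y (k + 1)) := by
          rw [wvec]; exact vecNorm_add_le _ _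
      _ ≤ Real.sqrt 2 * (κ * My) + Real.sqrt 2 * (κ * My) := add_le_add h1 h2
      _ = cW * (κ * My) := by rw [hcWdef]; ring
  have hw' : ∀ k, vecNorm (wvec' A y k) ≤ cW * (κ * My) := by
    intro k
    have h1 := hyw k (A k) (hATop k)
    have hkMy : 0 ≤ κ * My := mul_nonneg hκ0.le hMy0
    calc vecNorm (wvec' A y k) ≤ Real.sqrt 2 * (κ * My) := h1
      _ ≤ cW * (κ * My) := by
          apply mul_le_mul_of_nonneg_right _ hkMy
          rw [hcWdef]; nlinarith [Real.sqrt_nonneg 2]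
  -- invertibility and inverse bounds for Q
  have hκε0 : 0 < κ * (1 - ε) := mul_pos hκ0 h1εpos
  have hQfact : ∀ k, IsUnit (Qmat A B lam k) ∧ opB (Qmat A B lam k)⁻¹ (κ * (1 - ε))⁻¹ := by
    intro k
    induction k with
    | zero =>
      apply coercive_isUnit_opB hκε0
      intro x
      have hDl0 := hDlow 0 x
      have hQ0 : Qmat A B lam 0 = Dmat A B lam 0 := rfl
      rw [hQ0]
      have hprod : 0 ≤ κ * (ε - δ) * vecNorm x ^ 2 :=
        mul_nonneg (mul_nonneg hκ0.le (sub_nonneg.mpr hεδ)) (sq_nonneg _)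
      linarith only [hDl0, hprod]
    | succ k ih =>
      obtain ⟨hkU, hkB⟩ := ih
      apply coercive_isUnit_opB hκε0
      intro x
      have hQ1 : Qmat A B lam (k + 1) =
          Dmat A B lam (k + 1) - Emat A B k * ((Qmat A B lam k)⁻¹ * (Emat A B k)ᵀ) := rfl
      set u := (Emat A B k)ᵀ *ᵥ x with hudef
      have hsplit : x ⬝ᵥ (Qmat A B lam (k + 1)) *ᵥ x =
          x ⬝ᵥ (Dmat A B lam (k + 1)) *ᵥ x - u ⬝ᵥ ((Qmat A B lam k)⁻¹ *ᵥ u) := by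
        rw [hQ1, Matrix.sub_mulVec, dotProduct_sub]
        congr 1
        rw [← Matrix.mulVec_mulVec, ← Matrix.mulVec_mulVec,
          Matrix.dotProduct_mulVec x (Emat A B k), ← Matrix.mulVec_transpose]
      have hu1 : vecNorm u ≤ κ * θ * vecNorm x := hEopT k x
      have hu2 : u ⬝ᵥ ((Qmat A B lam k)⁻¹ *ᵥ u) ≤ (κ * (1 - ε))⁻¹ * vecNorm u ^ 2 := by
        calc u ⬝ᵥ ((Qmat A B lam k)⁻¹ *ᵥ u) ≤
            vecNorm u * vecNorm ((Qmat A B lam k)⁻¹ *ᵥ u) := dot_le_norm _ _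
          _ ≤ vecNorm u * ((κ * (1 - ε))⁻¹ * vecNorm u) :=
              mul_le_mul_of_nonneg_left (hkB u) (vecNorm_nonneg u)
          _ = (κ * (1 - ε))⁻¹ * vecNorm u ^ 2 := by ring
      have hu3 : vecNorm u ^ 2 ≤ (κ * θ) ^ 2 * vecNorm x ^ 2 := by
        have := pow_le_pow_left₀ (vecNorm_nonneg u) hu1 2
        calc vecNorm u ^ 2 ≤ (κ * θ * vecNorm x) ^ 2 := this
          _ = (κ * θ) ^ 2 * vecNorm x ^ 2 := by ring
      have hεδr : ε - δ = r ^ 2 * (1 - ε) := by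
        apply mul_left_cancel₀ h1εpos.ne'
        linear_combination hkey + (θ + r * (1 - ε)) * hθr
      have hu4 : (κ * (1 - ε))⁻¹ * ((κ * θ) ^ 2 * vecNorm x ^ 2) =
          κ * (ε - δ) * vecNorm x ^ 2 := by
        rw [hθr, hεδr]
        field_simp
      have hinv0 : (0:ℝ) ≤ (κ * (1 - ε))⁻¹ := (inv_pos.mpr hκε0).le
      have hu5 : u ⬝ᵥ ((Qmat A B lam k)⁻¹ *ᵥ u) ≤ κ * (ε - δ) * vecNorm x ^ 2 := by
        calc u ⬝ᵥ ((Qmat A B lam k)⁻¹ *ᵥ u) ≤ (κ * (1 - ε))⁻¹ * vecNorm u ^ 2 := hu2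
          _ ≤ (κ * (1 - ε))⁻¹ * ((κ * θ) ^ 2 * vecNorm x ^ 2) :=
              mul_le_mul_of_nonneg_left hu3 hinv0
          _ = κ * (ε - δ) * vecNorm x ^ 2 := hu4
      have hDl := hDlow (k + 1) x
      rw [hsplit]
      linarith only [hDl, hu5]
  have hQB : ∀ k, opB (Qmat A B lam k)⁻¹ (κ * (1 - ε))⁻¹ := fun k => (hQfact k).2
  have hU : ∀ k, opB (Umat A B lam k) r := by
    intro k v
    have h1 : (Umat A B lam k) *ᵥ v = (Qmat A B lam k)⁻¹ *ᵥ ((Emat A B k)ᵀ *ᵥ v) := by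
      rw [Umat, ← Matrix.mulVec_mulVec]
    rw [h1]
    have h2 := hQB k ((Emat A B k)ᵀ *ᵥ v)
    have h3 := hEopT k v
    have h4 : (κ * (1 - ε))⁻¹ * (κ * θ * vecNorm v) = r * vecNorm v := by
      rw [hrdef]; field_simp
    calc vecNorm ((Qmat A B lam k)⁻¹ *ᵥ ((Emat A B k)ᵀ *ᵥ v)) ≤
        (κ * (1 - ε))⁻¹ * vecNorm ((Emat A B k)ᵀ *ᵥ v) := h2
      _ ≤ (κ * (1 - ε))⁻¹ * (κ * θ * vecNorm v) := by
          apply mul_le_mul_of_nonneg_left h3 (inv_pos.mpr hκε0).le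
      _ = r * vecNorm v := h4
  have hκl0 : 0 < κ * lam0 := mul_pos hκ0 hlam0
  have hQ'B : ∀ k, opB (Qmat' A B lam k)⁻¹ (κ * lam0)⁻¹ :=
    fun k => (coercive_isUnit_opB hκl0 (quad_lower_of_eigMin (hQ'low k))).2
  -- bounds on v and v'
  have hκMy : 0 ≤ κ * My := mul_nonneg hκ0.le hMy0
  have hvmain : (κ * (1 - ε))⁻¹ * (cW * (κ * My) + κ * θ * (cV * My)) = cV * My := by
    rw [hθr, hcVdef]
    field_simp
    ring
  have hwE : ∀ k t, vecNorm t ≤ cV * My →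
      vecNorm (wvec A B y (k + 1) - (Emat A B k) *ᵥ t) ≤ cW * (κ * My) + κ * θ * (cV * My) := by
    intro k t ht
    calc vecNorm (wvec A B y (k + 1) - (Emat A B k) *ᵥ t) ≤
        vecNorm (wvec A B y (k + 1)) + vecNorm ((Emat A B k) *ᵥ t) := vecNorm_sub_le _ _
      _ ≤ cW * (κ * My) + κ * θ * (cV * My) := by
          apply add_le_add (hw (k + 1))
          calc vecNorm ((Emat A B k) *ᵥ t) ≤ κ * θ * vecNorm t := hEop k t
            _ ≤ κ * θ * (cV * My) := mul_le_mul_of_nonneg_left ht hκθ0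
  have hv : ∀ k, vecNorm (vvec A B lam y k) ≤ cV * My := by
    intro k
    induction k with
    | zero =>
      have h1 : vvec A B lam y 0 = (Qmat A B lam 0)⁻¹ *ᵥ (wvec A B y 0) := rfl
      rw [h1]
      calc vecNorm ((Qmat A B lam 0)⁻¹ *ᵥ (wvec A B y 0)) ≤
          (κ * (1 - ε))⁻¹ * vecNorm (wvec A B y 0) := hQB 0 _
        _ ≤ (κ * (1 - ε))⁻¹ * (cW * (κ * My) + κ * θ * (cV * My)) := by
            apply mul_le_mul_of_nonneg_left _ (inv_pos.mpr hκε0).le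
            have hw0 := hw 0
            linarith only [hw0, mul_nonneg hκθ0 (mul_nonneg hcV0.le hMy0)]
        _ = cV * My := hvmain
    | succ k ih =>
      have h1 : vvec A B lam y (k + 1) =
          (Qmat A B lam (k + 1))⁻¹ *ᵥ (wvec A B y (k + 1) - (Emat A B k) *ᵥ (vvec A B lam y k)) := rfl
      rw [h1]
      calc vecNorm _ ≤ (κ * (1 - ε))⁻¹ *
          vecNorm (wvec A B y (k + 1) - (Emat A B k) *ᵥ (vvec A B lam y k)) := hQB (k + 1) _
        _ ≤ (κ * (1 - ε))⁻¹ * (cW * (κ * My) + κ * θ * (cV * My)) :=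
            mul_le_mul_of_nonneg_left (hwE k _ ih) (inv_pos.mpr hκε0).le
        _ = cV * My := hvmain
  have hv'main : (κ * lam0)⁻¹ * (cW * (κ * My) + κ * θ * (cV * My)) = cV' * My := by
    rw [hcV'def]
    field_simp
  have hv' : ∀ k, vecNorm (vvec' A B lam y k) ≤ cV' * My := by
    intro k
    match k with
    | 0 =>
      have h1 : vvec' A B lam y 0 = (Qmat' A B lam 0)⁻¹ *ᵥ (wvec' A y 0) := rfl
      rw [h1]
      calc vecNorm ((Qmat' A B lam 0)⁻¹ *ᵥ (wvec' A y 0)) ≤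
          (κ * lam0)⁻¹ * vecNorm (wvec' A y 0) := hQ'B 0 _
        _ ≤ (κ * lam0)⁻¹ * (cW * (κ * My) + κ * θ * (cV * My)) := by
            apply mul_le_mul_of_nonneg_left _ (inv_pos.mpr hκl0).le
            have hw0 := hw' 0
            linarith only [hw0, mul_nonneg hκθ0 (mul_nonneg hcV0.le hMy0)]
        _ = cV' * My := hv'main
    | K + 1 =>
      have h1 : vvec' A B lam y (K + 1) =
          (Qmat' A B lam (K + 1))⁻¹ *ᵥ
            (wvec' A y (K + 1) - (Emat A B K) *ᵥ (vvec A B lam y K)) := rfl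
      rw [h1]
      have hwE' : vecNorm (wvec' A y (K + 1) - (Emat A B K) *ᵥ (vvec A B lam y K)) ≤
          cW * (κ * My) + κ * θ * (cV * My) := by
        calc vecNorm _ ≤ vecNorm (wvec' A y (K + 1)) +
            vecNorm ((Emat A B K) *ᵥ (vvec A B lam y K)) := vecNorm_sub_le _ _
          _ ≤ cW * (κ * My) + κ * θ * (cV * My) := by
              apply add_le_add (hw' (K + 1))
              calc vecNorm ((Emat A B K) *ᵥ (vvec A B lam y K)) ≤
                  κ * θ * vecNorm (vvec A B lam y K) := hEop K _
                _ ≤ κ * θ * (cV * My) := mul_le_mul_of_nonneg_left (hv K) hκθ0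
      calc vecNorm _ ≤ (κ * lam0)⁻¹ *
          vecNorm (wvec' A y (K + 1) - (Emat A B K) *ᵥ (vvec A B lam y K)) := hQ'B (K + 1) _
        _ ≤ (κ * lam0)⁻¹ * (cW * (κ * My) + κ * θ * (cV * My)) :=
            mul_le_mul_of_nonneg_left hwE' (inv_pos.mpr hκl0).le
        _ = cV' * My := hv'main
  -- geometric decay of successive differences
  have hdiff : ∀ l K : ℕ, l ≤ K →
      vecNorm (alphaAux A B lam y (K + 1) (l + 1) - alphaAux A B lam y K l) ≤
        c0 * My * r ^ l := by
    intro l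
    induction l with
    | zero =>
      intro K _
      have e1 : alphaAux A B lam y (K + 1) 1 =
          vvec A B lam y K - (Umat A B lam K) *ᵥ (vvec' A B lam y (K + 1)) := by
        show vvec A B lam y (K + 1 - 1) -
            (Umat A B lam (K + 1 - 1)) *ᵥ (alphaAux A B lam y (K + 1) 0) = _
        norm_num
        rfl
      have e2 : alphaAux A B lam y K 0 = vvec' A B lam y K := rfl
      rw [e1, e2, pow_zero, mul_one]
      have hUv : vecNorm ((Umat A B lam K) *ᵥ (vvec' A B lam y (K + 1))) ≤ r * (cV' * My) := by
        calc vecNorm _ ≤ r * vecNorm (vvec' A B lam y (K + 1)) := hU K _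
          _ ≤ r * (cV' * My) := mul_le_mul_of_nonneg_left (hv' (K + 1)) hr0
      calc vecNorm (vvec A B lam y K - (Umat A B lam K) *ᵥ (vvec' A B lam y (K + 1)) -
            vvec' A B lam y K) ≤
          vecNorm (vvec A B lam y K - (Umat A B lam K) *ᵥ (vvec' A B lam y (K + 1))) +
            vecNorm (vvec' A B lam y K) := vecNorm_sub_le _ _
        _ ≤ (vecNorm (vvec A B lam y K) +
            vecNorm ((Umat A B lam K) *ᵥ (vvec' A B lam y (K + 1)))) +
            vecNorm (vvec' A B lam y K) := by
            apply add_le_add_left (vecNorm_sub_le _ _)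
        _ ≤ (cV * My + r * (cV' * My)) + cV' * My := by
            apply add_le_add (add_le_add (hv K) hUv) (hv' K)
        _ = c0 * My := by rw [hc0def]; ring
    | succ l ih =>
      intro K hlK
      have hidx : K + 1 - (l + 1 + 1) = K - (l + 1) := by omega
      have e1 : alphaAux A B lam y (K + 1) (l + 1 + 1) =
          vvec A B lam y (K - (l + 1)) -
            (Umat A B lam (K - (l + 1))) *ᵥ (alphaAux A B lam y (K + 1) (l + 1)) := by
        show vvec A B lam y (K + 1 - (l + 1 + 1)) -
            (Umat A B lam (K + 1 - (l + 1 + 1))) *ᵥ (alphaAux A B lam y (K + 1) (l + 1)) = _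
        rw [hidx]
      have e2 : alphaAux A B lam y K (l + 1) =
          vvec A B lam y (K - (l + 1)) -
            (Umat A B lam (K - (l + 1))) *ᵥ (alphaAux A B lam y K l) := rfl
      have ediff : alphaAux A B lam y (K + 1) (l + 1 + 1) - alphaAux A B lam y K (l + 1) =
          -((Umat A B lam (K - (l + 1))) *ᵥ
            (alphaAux A B lam y (K + 1) (l + 1) - alphaAux A B lam y K l)) := by
        rw [e1, e2, Matrix.mulVec_sub]
        abel
      rw [ediff, vecNorm_neg]
      have hih := ih K (by omega)
      calc vecNorm _ ≤
          r * vecNorm (alphaAux A B lam y (K + 1) (l + 1) - alphaAux A B lam y K l) :=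
            hU (K - (l + 1)) _
        _ ≤ r * (c0 * My * r ^ l) := mul_le_mul_of_nonneg_left hih hr0
        _ = c0 * My * r ^ (l + 1) := by ring
  -- step bound for the sequences m ↦ α_{k|k+m}
  have hαest : ∀ k m : ℕ, alphaEst A B lam y k (k + m) = alphaAux A B lam y (k + m) m := by
    intro k m
    rw [alphaEst, Nat.add_sub_cancel_left]
  have hstep : ∀ k m : ℕ,
      vecNorm (alphaEst A B lam y k (k + (m + 1)) - alphaEst A B lam y k (k + m)) ≤
        c0 * My * r ^ m := by
    intro k m
    have h1 : k + (m + 1) = (k + m) + 1 := by omega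
    have h2 : (k + m) + 1 - k = m + 1 := by omega
    rw [h1, hαest k m, show alphaEst A B lam y k ((k + m) + 1) =
        alphaAux A B lam y ((k + m) + 1) (m + 1) from by rw [alphaEst, h2]]
    exact hdiff m (k + m) (Nat.le_add_left m k)
  -- construct the limits
  have main : ∀ k : ℕ, ∃ a : EuclideanSpace ℝ (Fin N),
      Filter.Tendsto
        (fun m : ℕ => ((WithLp.equiv 2 (Fin N → ℝ)).symm (alphaEst A B lam y k (k + m))))
        Filter.atTop (nhds a) ∧
      ∀ m : ℕ, dist ((WithLp.equiv 2 (Fin N → ℝ)).symm (alphaEst A B lam y k (k + m))) a ≤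
        c0 * My * r ^ m / (1 - r) := by
    intro k
    have hdist : ∀ m, dist ((WithLp.equiv 2 (Fin N → ℝ)).symm (alphaEst A B lam y k (k + m)))
        ((WithLp.equiv 2 (Fin N → ℝ)).symm (alphaEst A B lam y k (k + (m + 1)))) ≤
          (c0 * My) * r ^ m := by
      intro m
      rw [dist_comm, ← vecNorm_eq_dist]
      exact hstep k m
    have hcauchy : CauchySeq
        (fun m : ℕ => (WithLp.equiv 2 (Fin N → ℝ)).symm (alphaEst A B lam y k (k + m))) :=
      cauchySeq_of_le_geometric r (c0 * My) hr1 hdist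
    obtain ⟨a, ha⟩ := cauchySeq_tendsto_of_complete hcauchy
    exact ⟨a, ha, fun m => dist_le_of_le_geometric_of_tendsto r (c0 * My) hr1 hdist ha m⟩
  choose αs h1 h2 using main
  refine ⟨fun k => (WithLp.equiv 2 (Fin N → ℝ)) (αs k), ?_, ?_⟩
  · -- convergence
    intro k
    rw [tendsto_pi_nhds]
    intro i
    have hgen : ∀ K : ℕ, k ≤ K →
        |alphaEst A B lam y k K i - (WithLp.equiv 2 (Fin N → ℝ)) (αs k) i| ≤
          c0 * My * r ^ (K - k) / (1 - r) := by
      intro K hkK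
      have hKk : k + (K - k) = K := by omega
      have hb := h2 k (K - k)
      rw [hKk] at hb
      have heq : vecNorm (alphaEst A B lam y k K - (WithLp.equiv 2 (Fin N → ℝ)) (αs k)) =
          dist ((WithLp.equiv 2 (Fin N → ℝ)).symm (alphaEst A B lam y k K)) (αs k) := by
        rw [vecNorm_eq_dist, Equiv.symm_apply_apply]
      exact le_trans (le_trans
        (abs_le_vecNorm (alphaEst A B lam y k K - (WithLp.equiv 2 (Fin N → ℝ)) (αs k)) i)
        (le_of_eq heq)) hb
    have hg0 : Filter.Tendsto (fun K : ℕ => c0 * My * r ^ (K - k) / (1 - r))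
        Filter.atTop (nhds 0) := by
      have hp : Filter.Tendsto (fun K : ℕ => r ^ (K - k)) Filter.atTop (nhds 0) :=
        (tendsto_pow_atTop_nhds_zero_of_lt_one hr0 hr1).comp (Filter.tendsto_sub_atTop_nat k)
      have := (hp.const_mul (c0 * My)).div_const (1 - r)
      simpa using this
    have hz : Filter.Tendsto
        (fun K : ℕ => alphaEst A B lam y k K i - (WithLp.equiv 2 (Fin N → ℝ)) (αs k) i)
        Filter.atTop (nhds 0) := by
      apply squeeze_zero_norm' _ hg0
      filter_upwards [Filter.eventually_atTop.mpr ⟨k, fun K hK => hgen K hK⟩] with K hK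
      simpa [Real.norm_eq_abs] using hK
    have := hz.add_const ((WithLp.equiv 2 (Fin N → ℝ)) (αs k) i)
    simpa using this
  · -- the error bound
    intro k K hkK
    have hKk : k + (K - k) = K := by omega
    have hb := h2 k (K - k)
    rw [hKk] at hb
    calc vecNorm (alphaEst A B lam y k K - (WithLp.equiv 2 (Fin N → ℝ)) (αs k))
        = dist ((WithLp.equiv 2 (Fin N → ℝ)).symm (alphaEst A B lam y k K)) (αs k) := by
          rw [vecNorm_eq_dist, Equiv.symm_apply_apply]
      _ ≤ c0 * My * r ^ (K - k) / (1 - r) := hb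
      _ = c0 / (1 - r) * My * r ^ (K - k) := by ring
end

section
/- Let δ ∈ [0,1) and θ ∈ [0,(1−δ)/2], and define the sequence (ε_k)_{k≥0} by ε_0 = δ and ε_{k+1} = δ + θ²/(1−ε_k). Set ε = (1+δ)/2 − √((1−δ)²/4 − θ²). Then the sequence (ε_k) is monotonically nondecreasing, satisfies ε_k ≤ ε < 1 for all k, and converges to ε as k → ∞. -/
/-- the recursion `ε₀ = δ`, `ε_{k+1} = δ + θ²/(1 − ε_k)` is monotonically
nondecreasing, bounded by `ε = (1+δ)/2 − √((1−δ)²/4 − θ²) < 1`, and converges to `ε`. -/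
theorem eps_recursion_converges (δ θ : ℝ) (hδ0 : 0 ≤ δ) (hδ1 : δ < 1)
    (hθ0 : 0 ≤ θ) (hθ : θ ≤ (1 - δ) / 2)
    (e : ℕ → ℝ) (he0 : e 0 = δ) (heS : ∀ k, e (k + 1) = δ + θ ^ 2 / (1 - e k))
    (ε : ℝ) (hε : ε = (1 + δ) / 2 - Real.sqrt ((1 - δ) ^ 2 / 4 - θ ^ 2)) :
    Monotone e ∧ (∀ k, e k ≤ ε) ∧ ε < 1 ∧
      Filter.Tendsto e Filter.atTop (nhds ε) := by
  have hs2 : 0 ≤ (1 - δ) ^ 2 / 4 - θ ^ 2 := by nlinarith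
  set s := Real.sqrt ((1 - δ) ^ 2 / 4 - θ ^ 2) with hsdef
  have hs0 : 0 ≤ s := Real.sqrt_nonneg _
  have hssq : s ^ 2 = (1 - δ) ^ 2 / 4 - θ ^ 2 := Real.sq_sqrt hs2
  have hsle : s ≤ (1 - δ) / 2 := by nlinarith [hssq, hs0, sq_nonneg θ]
  have hε1 : ε < 1 := by rw [hε]; linarith
  have hδε : δ ≤ ε := by rw [hε]; linarith
  have hεpos : 0 < 1 - ε := by linarith
  have hεfix : ε = δ + θ ^ 2 / (1 - ε) := by
    rw [eq_comm]
    field_simp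
    nlinarith [hssq]
  -- main induction
  have key : ∀ k, e k ≤ e (k + 1) ∧ e k ≤ ε := by
    intro k
    induction k with
    | zero =>
      refine ⟨?_, by rw [he0]; exact hδε⟩
      rw [heS, he0]
      have h1 : 0 < 1 - δ := by linarith
      have h2 : 0 ≤ θ ^ 2 / (1 - δ) := div_nonneg (sq_nonneg θ) h1.le
      linarith
    | succ n ih =>
      obtain ⟨h1, h2⟩ := ih
      have hpos : 0 < 1 - e n := by linarith
      have hn1 : e (n + 1) ≤ ε := by
        rw [heS]
        have hle : θ ^ 2 / (1 - e n) ≤ θ ^ 2 / (1 - ε) := by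
          gcongr
        linarith [hεfix ▸ hle]
      refine ⟨?_, hn1⟩
      have hpos1 : 0 < 1 - e (n + 1) := by linarith
      rw [heS (n + 1)]
      have hq : (e (n + 1) - δ) * (1 - e (n + 1)) ≤ θ ^ 2 := by
        nlinarith [hssq,
          mul_nonneg (show (0:ℝ) ≤ (1 + δ) / 2 - e (n + 1) - s by linarith)
            (show (0:ℝ) ≤ (1 + δ) / 2 - e (n + 1) + s by linarith)]
      have hd : e (n + 1) - δ ≤ θ ^ 2 / (1 - e (n + 1)) :=
        (le_div_iff₀ hpos1).mpr (by linarith)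
      linarith
  have hmono : Monotone e := monotone_nat_of_le_succ fun k => (key k).1
  have hbdd : ∀ k, e k ≤ ε := fun k => (key k).2
  have hbddA : BddAbove (Set.range e) := ⟨ε, by rintro x ⟨k, rfl⟩; exact hbdd k⟩
  have hL : Filter.Tendsto e Filter.atTop (nhds (⨆ k, e k)) :=
    tendsto_atTop_ciSup hmono hbddA
  set L := ⨆ k, e k with hLdef
  have hLε : L ≤ ε := ciSup_le hbdd
  clear_value L
  have hL1 : (1 : ℝ) - L ≠ 0 := by intro h; nlinarith
  have h2 : Filter.Tendsto (fun k => e (k + 1)) Filter.atTop (nhds L) :=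
    hL.comp (Filter.tendsto_add_atTop_nat 1)
  have h3 : Filter.Tendsto (fun k => δ + θ ^ 2 / (1 - e k)) Filter.atTop
      (nhds (δ + θ ^ 2 / (1 - L))) :=
    Filter.Tendsto.add tendsto_const_nhds
      (Filter.Tendsto.div tendsto_const_nhds (Filter.Tendsto.sub tendsto_const_nhds hL) hL1)
  simp only [heS] at h2
  have L_eq : L = δ + θ ^ 2 / (1 - L) := tendsto_nhds_unique h2 h3
  have hLq : (L - δ) * (1 - L) = θ ^ 2 := by
    have : L - δ = θ ^ 2 / (1 - L) := by linarith
    rw [this, div_mul_cancel₀ _ hL1]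
  have hεs : ε = (1 + δ) / 2 - s := hε
  have hεq : (ε - δ) * (1 - ε) = θ ^ 2 := by
    rw [hε]; linear_combination -hssq
  have hfac : (ε - L) * ((1 + δ) - ε - L) = 0 := by linear_combination hεq - hLq
  have hlin : (1 + δ) - ε - L = 2 * s + (ε - L) := by rw [hε]; ring
  have hsq : (ε - L) ^ 2 + 2 * s * (ε - L) = 0 := by
    linear_combination hfac - (ε - L) * hlin
  have h1 : 0 ≤ ε - L := sub_nonneg.2 hLε
  have h2 : 0 ≤ 2 * s * (ε - L) := by positivity
  have h0 : ε - L = 0 := by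
    have hz : (ε - L) ^ 2 = 0 := le_antisymm (by linarith) (sq_nonneg _)
    exact pow_eq_zero_iff (by norm_num : (2:ℕ) ≠ 0) |>.mp hz
  have hLeq : L = ε := by linarith
  exact ⟨hmono, hbdd, hε1, by rw [← hLeq]; exact hL⟩
end

section
/- Let N ≥ 1, M > 0, δ ≥ 0. Let D₁ and D₂ be N×N real symmetric matrices with λmin(D₁) ≥ M(1−δ) and λmin(D₂) ≥ M(1−δ), and let E be an N×N real matrix such that the 2N×2N symmetric block matrix [[D₁, Eᵀ],[E, D₂]] satisfies λmax([[D₁,Eᵀ],[E,D₂]]) ≤ M(1+δ). Then ‖E‖ ≤ 2Mδ. -/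
open Matrix

/-- Spectral norm (largest singular value) of a real matrix, defined as the operator
norm: the supremum of `‖A x‖₂` over unit vectors `x`. -/
noncomputable def matrixSpectralNorm {m n : Type*} [Fintype m] [Fintype n]
    (A : Matrix m n ℝ) : ℝ :=
  sSup ((fun x => vecNorm (A.mulVec x)) '' {x | vecNorm x = 1})

/-- Largest eigenvalue of a real symmetric matrix, via the Rayleigh quotient. -/
noncomputable def eigMax {n : Type*} [Fintype n] (S : Matrix n n ℝ) : ℝ :=
  sSup ((fun x => x ⬝ᵥ S.mulVec x) '' {x | vecNorm x = 1})

lemma sum_sq_eq_one {n : Type*} [Fintype n] {v : n → ℝ} (h : vecNorm v = 1) :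
    ∑ i, v i ^ 2 = 1 := by
  rw [vecNorm, Real.sqrt_eq_one] at h; exact h

lemma abs_le_one_of_unit {n : Type*} [Fintype n] {v : n → ℝ} (h : vecNorm v = 1) (i : n) :
    |v i| ≤ 1 := by
  have hs := sum_sq_eq_one h
  have h1 : v i ^ 2 ≤ 1 := by
    rw [← hs]
    exact Finset.single_le_sum (f := fun j => v j ^ 2) (fun j _ => sq_nonneg _) (Finset.mem_univ i)
  nlinarith [abs_nonneg (v i), sq_abs (v i)]

lemma rayleigh_abs_bound {n : Type*} [Fintype n] (S : Matrix n n ℝ) {x : n → ℝ}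
    (hx : vecNorm x = 1) : |x ⬝ᵥ S.mulVec x| ≤ ∑ i, ∑ j, |S i j| := by
  have h1 : |x ⬝ᵥ S.mulVec x| ≤ ∑ i, |x i * ∑ j, S i j * x j| := by
    simpa [dotProduct, Matrix.mulVec] using
      Finset.abs_sum_le_sum_abs (fun i => x i * ∑ j, S i j * x j) Finset.univ
  refine h1.trans (Finset.sum_le_sum fun i _ => ?_)
  rw [abs_mul]
  have h2 : |∑ j, S i j * x j| ≤ ∑ j, |S i j * x j| :=
    Finset.abs_sum_le_sum_abs _ _
  calc |x i| * |∑ j, S i j * x j| ≤ 1 * ∑ j, |S i j * x j| := by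
        exact mul_le_mul (abs_le_one_of_unit hx i) h2 (abs_nonneg _) zero_le_one
    _ = ∑ j, |S i j| * |x j| := by simp [abs_mul]
    _ ≤ ∑ j, |S i j| * 1 := Finset.sum_le_sum fun j _ =>
        mul_le_mul_of_nonneg_left (abs_le_one_of_unit hx j) (abs_nonneg _)
    _ = ∑ j, |S i j| := by simp

lemma bddAbove_rayleigh {n : Type*} [Fintype n] (S : Matrix n n ℝ) :
    BddAbove ((fun x => x ⬝ᵥ S.mulVec x) '' {x | vecNorm x = 1}) := by
  refine ⟨∑ i, ∑ j, |S i j|, ?_⟩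
  rintro a ⟨x, hx, rfl⟩
  exact (abs_le.mp (rayleigh_abs_bound S hx)).2

lemma bddBelow_rayleigh {n : Type*} [Fintype n] (S : Matrix n n ℝ) :
    BddBelow ((fun x => x ⬝ᵥ S.mulVec x) '' {x | vecNorm x = 1}) := by
  refine ⟨-∑ i, ∑ j, |S i j|, ?_⟩
  rintro a ⟨x, hx, rfl⟩
  exact (abs_le.mp (rayleigh_abs_bound S hx)).1

lemma key_ineq (N : ℕ) (M δ : ℝ)
    (D₁ D₂ E : Matrix (Fin N) (Fin N) ℝ)
    (hD₁ : M * (1 - δ) ≤ eigMin D₁) (hD₂ : M * (1 - δ) ≤ eigMin D₂)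
    (hT : eigMax (Matrix.fromBlocks D₁ Eᵀ E D₂) ≤ M * (1 + δ))
    (x y : Fin N → ℝ) (hx : vecNorm x = 1) (hy : vecNorm y = 1) :
    y ⬝ᵥ E.mulVec x ≤ 2 * M * δ := by
  set c : ℝ := (Real.sqrt 2)⁻¹ with hc
  have hc2 : c ^ 2 = 1 / 2 := by
    rw [hc, inv_pow, Real.sq_sqrt (by norm_num : (0:ℝ) ≤ 2)]
    norm_num
  set z : Fin N ⊕ Fin N → ℝ := Sum.elim (c • x) (c • y) with hzdef
  have hz : vecNorm z = 1 := by
    rw [vecNorm]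
    have : ∑ i : Fin N ⊕ Fin N, z i ^ 2 = 1 := by
      rw [hzdef, Fintype.sum_sum_type]
      simp only [Sum.elim_inl, Sum.elim_inr, Pi.smul_apply, smul_eq_mul, mul_pow]
      rw [← Finset.mul_sum, ← Finset.mul_sum, sum_sq_eq_one hx, sum_sq_eq_one hy]
      rw [hc2]; norm_num
    rw [this, Real.sqrt_one]
  have hTz : (Matrix.fromBlocks D₁ Eᵀ E D₂).mulVec z
      = Sum.elim (D₁.mulVec (c • x) + Eᵀ.mulVec (c • y))
                 (E.mulVec (c • x) + D₂.mulVec (c • y)) := by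
    rw [hzdef, Matrix.fromBlocks_mulVec, Sum.elim_comp_inl, Sum.elim_comp_inr]
  have hswap : x ⬝ᵥ Eᵀ.mulVec y = y ⬝ᵥ E.mulVec x := by
    rw [Matrix.mulVec_transpose, dotProduct_comm, ← Matrix.dotProduct_mulVec]
  have expand : z ⬝ᵥ (Matrix.fromBlocks D₁ Eᵀ E D₂).mulVec z
      = c ^ 2 * (x ⬝ᵥ D₁.mulVec x) + c ^ 2 * (y ⬝ᵥ D₂.mulVec y)
        + 2 * c ^ 2 * (y ⬝ᵥ E.mulVec x) := by
    rw [hTz, hzdef, sumElim_dotProduct_sumElim]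
    simp only [dotProduct_add, Matrix.mulVec_smul, dotProduct_smul, smul_dotProduct,
      smul_eq_mul, hswap]
    ring
  have h1 : eigMin D₁ ≤ x ⬝ᵥ D₁.mulVec x := by
    rw [eigMin]; exact csInf_le (bddBelow_rayleigh D₁) ⟨x, hx, rfl⟩
  have h2 : eigMin D₂ ≤ y ⬝ᵥ D₂.mulVec y := by
    rw [eigMin]; exact csInf_le (bddBelow_rayleigh D₂) ⟨y, hy, rfl⟩
  have h3 : z ⬝ᵥ (Matrix.fromBlocks D₁ Eᵀ E D₂).mulVec z
      ≤ eigMax (Matrix.fromBlocks D₁ Eᵀ E D₂) := by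
    rw [eigMax]; exact le_csSup (bddAbove_rayleigh _) ⟨z, hz, rfl⟩
  rw [expand, hc2] at h3
  linarith


/-- if the diagonal blocks `D₁, D₂` of the symmetric block matrix
`[[D₁, Eᵀ],[E, D₂]]` have smallest eigenvalues at least `M(1−δ)` and the block matrix
has largest eigenvalue at most `M(1+δ)`, then `‖E‖ ≤ 2Mδ`. -/
theorem offdiagonal_block_bound (N : ℕ) (hN : 1 ≤ N) (M δ : ℝ) (hM : 0 < M) (hδ : 0 ≤ δ)
    (D₁ D₂ E : Matrix (Fin N) (Fin N) ℝ)
    (hD₁sym : D₁ᵀ = D₁) (hD₂sym : D₂ᵀ = D₂)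
    (hD₁ : M * (1 - δ) ≤ eigMin D₁) (hD₂ : M * (1 - δ) ≤ eigMin D₂)
    (hT : eigMax (Matrix.fromBlocks D₁ Eᵀ E D₂) ≤ M * (1 + δ)) :
    matrixSpectralNorm E ≤ 2 * M * δ := by
  have h2Mδ : 0 ≤ 2 * M * δ := by positivity
  rw [matrixSpectralNorm]
  apply Real.sSup_le _ h2Mδ
  rintro a ⟨x, hx, rfl⟩
  simp only
  set w : Fin N → ℝ := E.mulVec x with hw
  set n : ℝ := vecNorm w with hn
  have hn0 : 0 ≤ n := Real.sqrt_nonneg _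
  rcases eq_or_lt_of_le hn0 with h0 | hpos
  · rw [← h0]; exact h2Mδ
  · have hsum : ∑ i, w i ^ 2 = n ^ 2 := by
      rw [hn, vecNorm, Real.sq_sqrt (Finset.sum_nonneg fun i _ => sq_nonneg _)]
    set y : Fin N → ℝ := n⁻¹ • w with hy
    have hyunit : vecNorm y = 1 := by
      rw [vecNorm]
      have : ∑ i, y i ^ 2 = 1 := by
        rw [hy]
        simp only [Pi.smul_apply, smul_eq_mul, mul_pow]
        rw [← Finset.mul_sum, hsum, inv_pow]
        field_simp
      rw [this, Real.sqrt_one]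
    have hdot : y ⬝ᵥ E.mulVec x = n := by
      rw [hy, ← hw, smul_dotProduct, smul_eq_mul]
      have : w ⬝ᵥ w = n ^ 2 := by
        rw [dotProduct, ← hsum]
        exact Finset.sum_congr rfl fun i _ => (sq (w i)).symm
      rw [this]
      field_simp
    have := key_ineq N M δ D₁ D₂ E hD₁ hD₂ hT x y hx hyunit
    rw [hdot] at this
    exact this
end

section
/- Let 0 < η ≤ 1/2 and let g : ℝ → ℝ be a measurable function satisfying: g(t) = 0 for t ∉ [−η, 1+η]; Σ_{k∈ℤ} g(t−k)² = 1 for all t ∈ ℝ; and g(1−t) = g(t) for all t ∈ ℝ. For k ∈ ℤ and integer n ≥ 1 define ψ_{k,n}(t) = g(t−k)·√2·cos(π(n−1/2)(t−k)). Then each ψ_{k,n} belongs to L²(ℝ) and the family {ψ_{k,n} : k ∈ ℤ, n ≥ 1} is orthonormal in L²(ℝ): ∫ψ_{k,n}(t)ψ_{k',n'}(t)dt = 1 if (k,n) = (k',n') and 0 otherwise. -/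
open MeasureTheory

namespace LotAux

open Real

lemma integrable_aux {F : ℝ → ℝ} (hF : Measurable F) {C a b : ℝ}
    (hb : ∀ s, |F s| ≤ C) (h0 : ∀ s ∉ Set.Icc a b, F s = 0) :
    Integrable F (volume : Measure ℝ) := by
  have hFi : F = (Set.Icc a b).indicator F := by
    funext s
    by_cases h : s ∈ Set.Icc a b
    · simp [Set.indicator_of_mem h]
    · simp [Set.indicator_of_notMem h, h0 s h]
  rw [hFi, integrable_indicator_iff measurableSet_Icc]
  refine Measure.integrableOn_of_bounded (M := C) ?_ hF.aestronglyMeasurable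
    (ae_of_all _ fun s => by simpa using hb s)
  simp [Real.volume_Icc]

lemma ii_aux {F : ℝ → ℝ} (hF : Measurable F) {C : ℝ}
    (hb : ∀ s, |F s| ≤ C) (a b : ℝ) :
    IntervalIntegrable F volume a b := by
  rw [intervalIntegrable_iff]
  refine Measure.integrableOn_of_bounded (M := C) ?_ hF.aestronglyMeasurable
    (ae_of_all _ fun s => by simpa using hb s)
  refine ((measure_mono Set.Ioc_subset_Icc_self).trans_lt ?_).ne
  simp [Real.volume_Icc]

lemma cos_integral (η : ℝ) (hη0 : 0 < η) (hη : η ≤ 1 / 2)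
    (g : ℝ → ℝ) (hgmeas : Measurable g)
    (hsupp : ∀ t ∉ Set.Icc (-η) (1 + η), g t = 0)
    (hpart : ∀ t : ℝ, ∑' k : ℤ, g (t - k) ^ 2 = 1)
    (hsym : ∀ t : ℝ, g (1 - t) = g t) (m : ℤ) :
    (∫ s, g s ^ 2 * Real.cos ((m : ℝ) * Real.pi * s)) = if m = 0 then 1 else 0 := by
  have hπ := Real.pi_pos
  have hsum : ∀ t : ℝ, Summable (fun k : ℤ => g (t - k) ^ 2) := by
    intro t
    by_contra h
    have h1 := hpart t
    rw [tsum_eq_zero_of_not_summable h] at h1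
    norm_num at h1
  have hg2 : ∀ t : ℝ, g t ^ 2 ≤ 1 := by
    intro t
    have h1 := Summable.le_tsum (hsum t) 0 (fun k _ => sq_nonneg _)
    simpa [hpart t] using h1
  have hsym' : ∀ s : ℝ, g (1 + s) = g (-s) := by
    intro s; have := hsym (-s); rwa [sub_neg_eq_add] at this
  have factA : ∀ s : ℝ, η - 1 < s → s < 1 - η → g s ^ 2 + g (s + 1) ^ 2 = 1 := by
    intro s h1 h2
    have h := hpart s
    rw [tsum_eq_sum (s := ({0, -1} : Finset ℤ)) ?_] at h
    · simpa [Finset.sum_pair (by decide : (0 : ℤ) ≠ -1), sub_neg_eq_add] using h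
    · intro k hk
      simp only [Finset.mem_insert, Finset.mem_singleton] at hk
      push_neg at hk
      have hout : s - k ∉ Set.Icc (-η) (1 + η) := by
        rcases lt_or_ge (k : ℝ) 0 with h' | h'
        · have hklt : k < 0 := by exact_mod_cast h'
          have hk2 : (k : ℝ) ≤ -2 := by exact_mod_cast (by omega : k ≤ -2)
          simp only [Set.mem_Icc, not_and_or, not_le]
          right; linarith
        · have hkge : 0 ≤ k := by exact_mod_cast h'
          have hk1 : (1 : ℝ) ≤ (k : ℝ) := by exact_mod_cast (by omega : 1 ≤ k)
          simp only [Set.mem_Icc, not_and_or, not_le]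
          left; linarith
      simp [hsupp _ hout]
  have factB : ∀ s : ℝ, η < s → s < 1 - η → g s ^ 2 = 1 := by
    intro s h1 h2
    have h := hpart s
    rw [tsum_eq_sum (s := ({0} : Finset ℤ)) ?_] at h
    · simpa using h
    · intro k hk
      simp only [Finset.mem_singleton] at hk
      have hout : s - k ∉ Set.Icc (-η) (1 + η) := by
        rcases lt_or_ge (k : ℝ) 0 with h' | h'
        · have hklt : k < 0 := by exact_mod_cast h'
          have hk2 : (k : ℝ) ≤ -1 := by exact_mod_cast (by omega : k ≤ -1)
          simp only [Set.mem_Icc, not_and_or, not_le]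
          right; linarith
        · have hkge : 0 ≤ k := by exact_mod_cast h'
          have hk1 : (1 : ℝ) ≤ (k : ℝ) := by exact_mod_cast (by omega : 1 ≤ k)
          simp only [Set.mem_Icc, not_and_or, not_le]
          left; linarith
      simp [hsupp _ hout]
  set F : ℝ → ℝ := fun s => g s ^ 2 * Real.cos ((m : ℝ) * π * s) with hF
  have hcosm : Measurable fun s : ℝ => Real.cos ((m : ℝ) * π * s) :=
    Real.continuous_cos.measurable.comp (measurable_id.const_mul _)
  have hFmeas : Measurable F := (hgmeas.pow_const 2).mul hcosm
  have hbnd : ∀ (G : ℝ → ℝ), (∀ u, G u ^ 2 ≤ 1) →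
      ∀ s, |G s ^ 2 * Real.cos ((m : ℝ) * π * s)| ≤ 1 := by
    intro G hG s
    rw [abs_mul, abs_of_nonneg (sq_nonneg _)]
    exact mul_le_one₀ (hG s) (abs_nonneg _) (Real.abs_cos_le_one _)
  have hFb : ∀ s, |F s| ≤ 1 := hbnd g hg2
  have hF0 : ∀ s ∉ Set.Icc (-η) (1 + η), F s = 0 := fun s hs => by
    simp [hF, hsupp s hs]
  have hstep1 : (∫ s, F s) = ∫ s in (-η)..(1 + η), F s := by
    rw [← setIntegral_eq_integral_of_forall_compl_eq_zero hF0,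
      integral_Icc_eq_integral_Ioc,
      intervalIntegral.integral_of_le (show (-η) ≤ 1 + η by linarith)]
  have hsplit : (∫ s in (-η)..(1 + η), F s)
      = (∫ s in (-η)..η, F s) + (∫ s in η..(1 - η), F s)
        + (∫ s in (1 - η)..(1 + η), F s) := by
    rw [intervalIntegral.integral_add_adjacent_intervals (ii_aux hFmeas hFb _ _)
        (ii_aux hFmeas hFb _ _),
      intervalIntegral.integral_add_adjacent_intervals (ii_aux hFmeas hFb _ _)
        (ii_aux hFmeas hFb _ _)]
  have hGmeas : Measurable fun s : ℝ => g (-s) ^ 2 * Real.cos ((m : ℝ) * π * s) :=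
    ((hgmeas.comp measurable_neg).pow_const 2).mul hcosm
  have hGb : ∀ s, |g (-s) ^ 2 * Real.cos ((m : ℝ) * π * s)| ≤ 1 :=
    hbnd (fun s => g (-s)) (fun u => hg2 (-u))
  have hneg : (∫ s in (-η)..η, g (-s) ^ 2 * Real.cos ((m : ℝ) * π * s))
      = ∫ s in (-η)..η, F s := by
    have h1 : ∀ s, g (-s) ^ 2 * Real.cos ((m : ℝ) * π * s) = F (-s) := by
      intro s
      rw [hF]; dsimp only
      rw [show (m : ℝ) * π * (-s) = -((m : ℝ) * π * s) by ring, Real.cos_neg]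
    rw [intervalIntegral.integral_congr (g := fun s => F (-s)) (fun s _ => h1 s)]
    have h2 := intervalIntegral.integral_comp_neg (a := -η) (b := η) (f := F)
    rwa [neg_neg] at h2
  have hne' : ∀ c : ℝ, ∀ᵐ s : ℝ, s ≠ c := by
    intro c
    rw [ae_iff]
    have : {s : ℝ | ¬s ≠ c} = {c} := by ext s; simp
    rw [this]
    exact measure_singleton c
  have hK : (∫ s in (-η)..η, F s)
      = (1 / 2) * ∫ s in (-η)..η, Real.cos ((m : ℝ) * π * s) := by
    have hae : ∀ᵐ s : ℝ, s ∈ Set.uIoc (-η) η →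
        g (-s) ^ 2 * Real.cos ((m : ℝ) * π * s) + F s = Real.cos ((m : ℝ) * π * s) := by
      filter_upwards [hne' η] with s hs hmem
      rw [Set.uIoc_of_le (by linarith : -η ≤ η)] at hmem
      have h2 : s < η := lt_of_le_of_ne hmem.2 hs
      have hA : g s ^ 2 + g (-s) ^ 2 = 1 := by
        have h3 := factA s (by linarith [hmem.1]) (by linarith)
        rwa [show s + 1 = 1 + s by ring, hsym' s] at h3
      rw [hF]; dsimp only
      linear_combination Real.cos ((m : ℝ) * π * s) * hA
    have h2K : (∫ s in (-η)..η, g (-s) ^ 2 * Real.cos ((m : ℝ) * π * s))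
        + (∫ s in (-η)..η, F s)
        = ∫ s in (-η)..η, Real.cos ((m : ℝ) * π * s) := by
      rw [← intervalIntegral.integral_add (ii_aux hGmeas hGb _ _) (ii_aux hFmeas hFb _ _)]
      exact intervalIntegral.integral_congr_ae hae
    linarith [hneg, h2K]
  have hM : (∫ s in η..(1 - η), F s) = ∫ s in η..(1 - η), Real.cos ((m : ℝ) * π * s) := by
    apply intervalIntegral.integral_congr_ae
    filter_upwards [hne' (1 - η)] with s hs hmem
    rw [Set.uIoc_of_le (by linarith : η ≤ 1 - η)] at hmem
    have hB := factB s hmem.1 (lt_of_le_of_ne hmem.2 hs)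
    rw [hF]; dsimp only
    rw [hB, one_mul]
  have hR : (∫ s in (1 - η)..(1 + η), F s)
      = (-1 : ℝ) ^ m * ((1 / 2) * ∫ s in (-η)..η, Real.cos ((m : ℝ) * π * s)) := by
    have h1 : (∫ s in (1 - η)..(1 + η), F s) = ∫ u in (-η)..η, F (1 + u) := by
      have h2 := intervalIntegral.integral_comp_add_left (a := -η) (b := η) (f := F) 1
      rw [show (1:ℝ) - η = 1 + -η by ring]
      exact h2.symm
    rw [h1]
    have h2 : ∀ u, F (1 + u) = (-1 : ℝ) ^ m * (g (-u) ^ 2 * Real.cos ((m : ℝ) * π * u)) := by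
      intro u
      rw [hF]; dsimp only
      rw [hsym' u,
        show (m : ℝ) * π * (1 + u) = (m : ℝ) * π - -((m : ℝ) * π * u) by ring,
        Real.cos_int_mul_pi_sub, Real.cos_neg]
      ring
    rw [intervalIntegral.integral_congr
        (g := fun u => (-1 : ℝ) ^ m * (g (-u) ^ 2 * Real.cos ((m : ℝ) * π * u)))
        (fun u _ => h2 u),
      intervalIntegral.integral_const_mul, hneg, hK]
  rw [hstep1, hsplit, hK, hM, hR]
  by_cases hm : m = 0
  · subst hm
    simp only [Int.cast_zero, zero_mul, Real.cos_zero, zpow_zero, one_mul]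
    rw [intervalIntegral.integral_const, intervalIntegral.integral_const]
    simp only [smul_eq_mul, mul_one, if_true]
    norm_num
    ring
  · rw [if_neg hm]
    have hc : (m : ℝ) * π ≠ 0 := mul_ne_zero (Int.cast_ne_zero.2 hm) Real.pi_ne_zero
    have hcos : ∀ a b : ℝ, (∫ s in a..b, Real.cos ((m : ℝ) * π * s))
        = ((m : ℝ) * π)⁻¹ * (Real.sin ((m : ℝ) * π * b) - Real.sin ((m : ℝ) * π * a)) := by
      intro a b
      rw [intervalIntegral.integral_comp_mul_left (fun x => Real.cos x) hc,
        integral_cos, smul_eq_mul]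
    rw [hcos, hcos]
    have hs1 : Real.sin ((m : ℝ) * π * (1 - η)) = -((-1 : ℝ) ^ m * Real.sin ((m : ℝ) * π * η)) := by
      rw [show (m : ℝ) * π * (1 - η) = (m : ℝ) * π - (m : ℝ) * π * η by ring,
        Real.sin_int_mul_pi_sub]
    have hs2 : Real.sin ((m : ℝ) * π * (-η)) = -Real.sin ((m : ℝ) * π * η) := by
      rw [show (m : ℝ) * π * (-η) = -((m : ℝ) * π * η) by ring, Real.sin_neg]
    rw [hs1, hs2]
    ring

lemma diag_integral (η : ℝ) (hη0 : 0 < η) (hη : η ≤ 1 / 2)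
    (g : ℝ → ℝ) (hgmeas : Measurable g)
    (hsupp : ∀ t ∉ Set.Icc (-η) (1 + η), g t = 0)
    (hpart : ∀ t : ℝ, ∑' k : ℤ, g (t - k) ^ 2 = 1)
    (hsym : ∀ t : ℝ, g (1 - t) = g t)
    (hg2 : ∀ t : ℝ, g t ^ 2 ≤ 1)
    (k : ℤ) (n n' : ℕ) (hn : 1 ≤ n) (hn' : 1 ≤ n') :
    (∫ t : ℝ, (g (t - (k : ℝ)) * (Real.sqrt 2 *
        Real.cos (Real.pi * ((n : ℝ) - 1 / 2) * (t - (k : ℝ))))) *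
      (g (t - (k : ℝ)) * (Real.sqrt 2 *
        Real.cos (Real.pi * ((n' : ℝ) - 1 / 2) * (t - (k : ℝ)))))) =
      if n = n' then 1 else 0 := by
  have h2 : Real.sqrt 2 * Real.sqrt 2 = 2 := Real.mul_self_sqrt (by norm_num)
  have hI : ∀ m : ℤ, Integrable
      (fun s : ℝ => g s ^ 2 * Real.cos ((m : ℝ) * Real.pi * s)) (volume : Measure ℝ) := by
    intro m
    refine integrable_aux
      ((hgmeas.pow_const 2).mul
        (Real.continuous_cos.measurable.comp (measurable_id.const_mul _)))
      (C := 1) (a := -η) (b := 1 + η) ?_ ?_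
    · intro s
      rw [abs_mul, abs_of_nonneg (sq_nonneg _)]
      exact mul_le_one₀ (hg2 s) (abs_nonneg _) (Real.abs_cos_le_one _)
    · intro s hs; rw [hsupp s hs]; ring
  have hpt : (fun t : ℝ => (g (t - (k : ℝ)) * (Real.sqrt 2 *
        Real.cos (Real.pi * ((n : ℝ) - 1 / 2) * (t - (k : ℝ))))) *
      (g (t - (k : ℝ)) * (Real.sqrt 2 *
        Real.cos (Real.pi * ((n' : ℝ) - 1 / 2) * (t - (k : ℝ))))))
      = fun t : ℝ => (fun s : ℝ =>
          g s ^ 2 * Real.cos ((((n : ℤ) - (n' : ℤ) : ℤ) : ℝ) * Real.pi * s)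
          + g s ^ 2 * Real.cos ((((n : ℤ) + (n' : ℤ) - 1 : ℤ) : ℝ) * Real.pi * s))
        (t - (k : ℝ)) := by
    funext t
    show _ = g (t - (k : ℝ)) ^ 2 *
        Real.cos ((((n : ℤ) - (n' : ℤ) : ℤ) : ℝ) * Real.pi * (t - (k : ℝ)))
      + g (t - (k : ℝ)) ^ 2 *
        Real.cos ((((n : ℤ) + (n' : ℤ) - 1 : ℤ) : ℝ) * Real.pi * (t - (k : ℝ)))
    have hkey : Real.cos ((((n : ℤ) - (n' : ℤ) : ℤ) : ℝ) * Real.pi * (t - (k : ℝ)))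
        + Real.cos ((((n : ℤ) + (n' : ℤ) - 1 : ℤ) : ℝ) * Real.pi * (t - (k : ℝ)))
        = 2 * Real.cos (Real.pi * ((n : ℝ) - 1 / 2) * (t - (k : ℝ)))
          * Real.cos (Real.pi * ((n' : ℝ) - 1 / 2) * (t - (k : ℝ))) := by
      rw [Real.cos_add_cos,
        show ((((n : ℤ) - (n' : ℤ) : ℤ) : ℝ) * Real.pi * (t - (k : ℝ))
            + (((n : ℤ) + (n' : ℤ) - 1 : ℤ) : ℝ) * Real.pi * (t - (k : ℝ))) / 2
          = Real.pi * ((n : ℝ) - 1 / 2) * (t - (k : ℝ)) by push_cast; ring,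
        show ((((n : ℤ) - (n' : ℤ) : ℤ) : ℝ) * Real.pi * (t - (k : ℝ))
            - (((n : ℤ) + (n' : ℤ) - 1 : ℤ) : ℝ) * Real.pi * (t - (k : ℝ))) / 2
          = -(Real.pi * ((n' : ℝ) - 1 / 2) * (t - (k : ℝ))) by push_cast; ring,
        Real.cos_neg]
    linear_combination (-(g (t - (k : ℝ)) ^ 2)) * hkey
      + (g (t - (k : ℝ)) ^ 2 * Real.cos (Real.pi * ((n : ℝ) - 1 / 2) * (t - (k : ℝ)))
          * Real.cos (Real.pi * ((n' : ℝ) - 1 / 2) * (t - (k : ℝ)))) * h2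
  rw [hpt, integral_sub_right_eq_self (fun s : ℝ =>
      g s ^ 2 * Real.cos ((((n : ℤ) - (n' : ℤ) : ℤ) : ℝ) * Real.pi * s)
      + g s ^ 2 * Real.cos ((((n : ℤ) + (n' : ℤ) - 1 : ℤ) : ℝ) * Real.pi * s)) ((k : ℝ)),
    integral_add (hI _) (hI _),
    cos_integral η hη0 hη g hgmeas hsupp hpart hsym ((n : ℤ) - (n' : ℤ)),
    cos_integral η hη0 hη g hgmeas hsupp hpart hsym ((n : ℤ) + (n' : ℤ) - 1)]
  have hm2 : ¬((n : ℤ) + (n' : ℤ) - 1 = 0) := by omega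
  rw [if_neg hm2]
  by_cases hnn : n = n'
  · subst hnn
    simp
  · have hm1 : ¬((n : ℤ) - (n' : ℤ) = 0) := by
      intro h; apply hnn; omega
    rw [if_neg hm1, if_neg hnn]
    ring

lemma adj_integral (η : ℝ) (g : ℝ → ℝ)
    (hsym : ∀ t : ℝ, g (1 - t) = g t)
    (k : ℤ) (n n' : ℕ) :
    (∫ t : ℝ, (g (t - (k : ℝ)) * (Real.sqrt 2 *
        Real.cos (Real.pi * ((n : ℝ) - 1 / 2) * (t - (k : ℝ))))) *
      (g (t - ((k : ℝ) + 1)) * (Real.sqrt 2 *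
        Real.cos (Real.pi * ((n' : ℝ) - 1 / 2) * (t - ((k : ℝ) + 1)))))) = 0 := by
  have h2 : Real.sqrt 2 * Real.sqrt 2 = 2 := Real.mul_self_sqrt (by norm_num)
  have hsym' : ∀ s : ℝ, g (1 + s) = g (-s) := by
    intro s; have := hsym (-s); rwa [sub_neg_eq_add] at this
  have hca : Real.cos (Real.pi * ((n : ℝ) - 1 / 2)) = 0 := by
    rw [show Real.pi * ((n : ℝ) - 1 / 2)
        = ((n : ℤ) : ℝ) * Real.pi - Real.pi / 2 by push_cast; ring,
      Real.cos_int_mul_pi_sub, Real.cos_pi_div_two, mul_zero]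
  have hc2 : ∀ s : ℝ, Real.cos (Real.pi * ((n : ℝ) - 1 / 2) * (1 - s))
      = -Real.cos (Real.pi * ((n : ℝ) - 1 / 2) * (1 + s)) := by
    intro s
    have h := Real.cos_add_cos (Real.pi * ((n : ℝ) - 1 / 2) * (1 - s))
      (Real.pi * ((n : ℝ) - 1 / 2) * (1 + s))
    rw [show (Real.pi * ((n : ℝ) - 1 / 2) * (1 - s)
        + Real.pi * ((n : ℝ) - 1 / 2) * (1 + s)) / 2
        = Real.pi * ((n : ℝ) - 1 / 2) by ring, hca] at h
    norm_num at h
    linarith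
  set Φ : ℝ → ℝ := fun s => g (1 + s) * g s
      * (2 * Real.cos (Real.pi * ((n : ℝ) - 1 / 2) * (1 + s))
        * Real.cos (Real.pi * ((n' : ℝ) - 1 / 2) * s)) with hΦ
  have hpt : (fun t : ℝ => (g (t - (k : ℝ)) * (Real.sqrt 2 *
        Real.cos (Real.pi * ((n : ℝ) - 1 / 2) * (t - (k : ℝ))))) *
      (g (t - ((k : ℝ) + 1)) * (Real.sqrt 2 *
        Real.cos (Real.pi * ((n' : ℝ) - 1 / 2) * (t - ((k : ℝ) + 1))))))
      = fun t : ℝ => Φ (t - ((k : ℝ) + 1)) := by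
    funext t
    show _ = g (1 + (t - ((k : ℝ) + 1))) * g (t - ((k : ℝ) + 1))
      * (2 * Real.cos (Real.pi * ((n : ℝ) - 1 / 2) * (1 + (t - ((k : ℝ) + 1))))
        * Real.cos (Real.pi * ((n' : ℝ) - 1 / 2) * (t - ((k : ℝ) + 1))))
    rw [show (1 : ℝ) + (t - ((k : ℝ) + 1)) = t - (k : ℝ) by ring]
    linear_combination (g (t - (k : ℝ)) * g (t - ((k : ℝ) + 1))
      * Real.cos (Real.pi * ((n : ℝ) - 1 / 2) * (t - (k : ℝ)))
      * Real.cos (Real.pi * ((n' : ℝ) - 1 / 2) * (t - ((k : ℝ) + 1)))) * h2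
  rw [hpt, integral_sub_right_eq_self Φ ((k : ℝ) + 1)]
  have hodd : ∀ s : ℝ, Φ (-s) = -Φ s := by
    intro s
    show g (1 + -s) * g (-s)
        * (2 * Real.cos (Real.pi * ((n : ℝ) - 1 / 2) * (1 + -s))
          * Real.cos (Real.pi * ((n' : ℝ) - 1 / 2) * (-s)))
      = -(g (1 + s) * g s
        * (2 * Real.cos (Real.pi * ((n : ℝ) - 1 / 2) * (1 + s))
          * Real.cos (Real.pi * ((n' : ℝ) - 1 / 2) * s)))
    rw [show (1 : ℝ) + -s = 1 - s by ring, hsym s,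
      show Real.pi * ((n' : ℝ) - 1 / 2) * (-s)
        = -(Real.pi * ((n' : ℝ) - 1 / 2) * s) by ring,
      Real.cos_neg, hc2 s, ← hsym' s]
    ring
  have hneg1 : (∫ s : ℝ, Φ (-s)) = ∫ s : ℝ, Φ s := integral_neg_eq_self Φ volume
  have hneg2 : (∫ s : ℝ, Φ (-s)) = -∫ s : ℝ, Φ s := by
    simp_rw [hodd]
    exact integral_neg Φ
  linarith

end LotAux

/-- the lapped orthogonal transform functions
`ψ_{k,n}(t) = g(t−k) √2 cos(π(n−1/2)(t−k))` built from a window `g` supported in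
`[−η, 1+η]` with `Σ_k g(t−k)² = 1` and `g(1−t) = g(t)` form an orthonormal family
in `L²(ℝ)`. -/
theorem lot_orthonormal (η : ℝ) (hη0 : 0 < η) (hη : η ≤ 1 / 2)
    (g : ℝ → ℝ) (hgmeas : Measurable g)
    (hsupp : ∀ t ∉ Set.Icc (-η) (1 + η), g t = 0)
    (hpart : ∀ t : ℝ, ∑' k : ℤ, g (t - k) ^ 2 = 1)
    (hsym : ∀ t : ℝ, g (1 - t) = g t)
    (ψ : ℤ → ℕ → ℝ → ℝ)
    (hψ : ∀ (k : ℤ) (n : ℕ) (t : ℝ),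
      ψ k n t = g (t - k) * (Real.sqrt 2 *
        Real.cos (Real.pi * ((n : ℝ) - 1 / 2) * (t - k)))) :
    (∀ (k : ℤ) (n : ℕ), 1 ≤ n → MemLp (ψ k n) 2 (volume : Measure ℝ)) ∧
    (∀ (k k' : ℤ) (n n' : ℕ), 1 ≤ n → 1 ≤ n' →
      (∫ t, ψ k n t * ψ k' n' t ∂(volume : Measure ℝ)) =
        if k = k' ∧ n = n' then 1 else 0) := by
  have hsum : ∀ t : ℝ, Summable (fun k : ℤ => g (t - k) ^ 2) := by
    intro t
    by_contra h
    have h1 := hpart t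
    rw [tsum_eq_zero_of_not_summable h] at h1
    norm_num at h1
  have hg2 : ∀ t : ℝ, g t ^ 2 ≤ 1 := by
    intro t
    have h1 := Summable.le_tsum (hsum t) 0 (fun k _ => sq_nonneg _)
    simpa [hpart t] using h1
  have hg1 : ∀ t : ℝ, |g t| ≤ 1 := fun t => (sq_le_one_iff_abs_le_one _).1 (hg2 t)
  have hψmeas : ∀ (k : ℤ) (n : ℕ), Measurable (ψ k n) := by
    intro k n
    have : ψ k n = fun t => g (t - (k : ℝ)) * (Real.sqrt 2 *
        Real.cos (Real.pi * ((n : ℝ) - 1 / 2) * (t - (k : ℝ)))) := funext (hψ k n)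
    rw [this]
    exact (hgmeas.comp (measurable_id.sub_const _)).mul
      (measurable_const.mul (Real.continuous_cos.measurable.comp
        ((measurable_id.sub_const _).const_mul _)))
  have hψb : ∀ (k : ℤ) (n : ℕ) (t : ℝ), |ψ k n t| ≤ Real.sqrt 2 := by
    intro k n t
    rw [hψ, abs_mul, abs_mul, abs_of_nonneg (Real.sqrt_nonneg 2)]
    have h1 := hg1 (t - (k : ℝ))
    have h3 := Real.abs_cos_le_one (Real.pi * ((n : ℝ) - 1 / 2) * (t - (k : ℝ)))
    have h4 := abs_nonneg (g (t - (k : ℝ)))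
    have h5 := abs_nonneg (Real.cos (Real.pi * ((n : ℝ) - 1 / 2) * (t - (k : ℝ))))
    have h6 := Real.sqrt_nonneg 2
    have hA : Real.sqrt 2 * |Real.cos (Real.pi * ((n : ℝ) - 1 / 2) * (t - (k : ℝ)))|
        ≤ Real.sqrt 2 := by nlinarith
    calc |g (t - (k : ℝ))| * (Real.sqrt 2 *
          |Real.cos (Real.pi * ((n : ℝ) - 1 / 2) * (t - (k : ℝ)))|)
        ≤ 1 * Real.sqrt 2 := mul_le_mul h1 hA (by positivity) one_pos.le
      _ = Real.sqrt 2 := one_mul _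
  have hψ0 : ∀ (k : ℤ) (n : ℕ) (t : ℝ),
      t ∉ Set.Icc ((k : ℝ) - η) ((k : ℝ) + 1 + η) → ψ k n t = 0 := by
    intro k n t ht
    rw [hψ]
    have hout : t - (k : ℝ) ∉ Set.Icc (-η) (1 + η) := by
      simp only [Set.mem_Icc, not_and_or, not_le] at ht ⊢
      rcases ht with h | h
      · left; linarith
      · right; linarith
    rw [hsupp _ hout, zero_mul]
  constructor
  · intro k n _
    rw [memLp_two_iff_integrable_sq (hψmeas k n).aestronglyMeasurable]
    refine LotAux.integrable_aux ((hψmeas k n).pow_const 2) (C := 2)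
      (a := (k : ℝ) - η) (b := (k : ℝ) + 1 + η) ?_ ?_
    · intro s
      rw [abs_of_nonneg (sq_nonneg _)]
      have h1 := hψb k n s
      have h7 : Real.sqrt 2 ^ 2 = 2 := Real.sq_sqrt (by norm_num)
      have h8 := abs_nonneg (ψ k n s)
      nlinarith [sq_abs (ψ k n s)]
    · intro s hs
      rw [hψ0 k n s hs]; ring
  · intro k k' n n' hn hn'
    have hdiag : ∀ (k : ℤ) (n n' : ℕ), 1 ≤ n → 1 ≤ n' →
        (∫ t, ψ k n t * ψ k n' t) = if n = n' then 1 else 0 := by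
      intro k n n' hn hn'
      have := LotAux.diag_integral η hη0 hη g hgmeas hsupp hpart hsym hg2 k n n' hn hn'
      rw [← this]
      apply integral_congr_ae (ae_of_all _ _)
      intro t
      rw [hψ, hψ]
    have hadj : ∀ (k : ℤ) (n n' : ℕ), (∫ t, ψ k n t * ψ (k + 1) n' t) = 0 := by
      intro k n n'
      have := LotAux.adj_integral η g hsym k n n'
      rw [← this]
      apply integral_congr_ae (ae_of_all _ _)
      intro t
      rw [hψ, hψ]
      push_cast
      ring
    have hfar : ∀ (k k' : ℤ), k + 2 ≤ k' → ∀ (n n' : ℕ),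
        (∫ t, ψ k n t * ψ k' n' t) = 0 := by
      intro k k' hkk n n'
      apply integral_eq_zero_of_ae
      have hkR : (k : ℝ) + 2 ≤ (k' : ℝ) := by exact_mod_cast hkk
      have hnull : volume (Set.Icc ((k' : ℝ) - η) ((k : ℝ) + 1 + η)) = 0 := by
        rw [Real.volume_Icc, ENNReal.ofReal_eq_zero.2 (by linarith)]
      rw [Filter.EventuallyEq, ae_iff]
      refine measure_mono_null ?_ hnull
      intro t ht
      simp only [Set.mem_setOf_eq, Pi.zero_apply] at ht
      have h1 : g (t - (k : ℝ)) ≠ 0 := by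
        intro h0; apply ht; rw [hψ, hψ, h0]; ring
      have h1' : g (t - (k' : ℝ)) ≠ 0 := by
        intro h0; apply ht; rw [hψ, hψ, h0]; ring
      have m1 : t - (k : ℝ) ∈ Set.Icc (-η) (1 + η) := by
        by_contra hc; exact h1 (hsupp _ hc)
      have m2 : t - (k' : ℝ) ∈ Set.Icc (-η) (1 + η) := by
        by_contra hc; exact h1' (hsupp _ hc)
      rw [Set.mem_Icc] at m1 m2 ⊢
      constructor
      · linarith [m2.1]
      · linarith [m1.2]
    by_cases hkk : k = k'
    · subst hkk
      rw [hdiag k n n' hn hn']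
      by_cases hnn : n = n' <;> simp [hnn]
    · rw [if_neg (by exact fun h => hkk h.1)]
      have hcases : k' = k + 1 ∨ k = k' + 1 ∨ k + 2 ≤ k' ∨ k' + 2 ≤ k := by omega
      rcases hcases with h | h | h | h
      · subst h; exact hadj k n n'
      · subst h
        have := hadj k' n' n
        rw [← this]
        apply integral_congr_ae (ae_of_all _ _)
        intro t; ring
      · exact hfar k k' h n n'
      · have := hfar k' k h n' n
        rw [← this]
        apply integral_congr_ae (ae_of_all _ _)
        intro t; ring
end
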